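/- arXiv:2204.07325 — 2 statements merged into one kernel-verified Lean document; each statement's English description precedes it below -/
import Mathlib

section
/- Let a, d, k be positive integers with gcd(a,d)=1 and 2 ≤ k ≤ a, let λ ∈ ℂ with λ ≠ 0, λ ≠ 1 and λ^{a} = 1, and let μ be a positive integer. Then s_μ^{(λ)}(a, a+d, …, a+(k−1)d) = (1/(μ+1))·Σ_{n=0}^{μ} C(μ+1,n) B_n a^{n−1} Σ_{i=1}^{a−1} m_i^{μ+1−n} λ^{m_i} + ((−1)^{μ+1}/(λ−1)^{μ+1})·Σ_{j=0}^{μ−1} ⟨μ, j⟩ λ^{j+1}, where m_i is taken with respect to the sequence a, a+d, …, a+(k−1)d. -/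
open Finset

/-- `n` is representable as a nonnegative integer combination of the `a i`. -/
def Representable {k : ℕ} (a : Fin k → ℕ) (n : ℕ) : Prop :=
  ∃ x : Fin k → ℕ, n = ∑ i, x i * a i

/-- The set of positive integers that are not representable. -/
def NRset {k : ℕ} (a : Fin k → ℕ) : Set ℕ :=
  {n | 0 < n ∧ ¬ Representable a n}

/-- Eulerian numbers `⟨n,m⟩ = Σ_{k=0}^{m} (−1)^k C(n+1,k)(m−k+1)^n`. -/
def eulerianNum (n m : ℕ) : ℤ :=
  ∑ k ∈ Finset.range (m + 1), (-1 : ℤ) ^ k * ((n + 1).choose k : ℤ) * ((m - k + 1 : ℕ) : ℤ) ^ n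


lemma swap_filter_sum {M : Type*} [AddCommMonoid M] (N : ℕ) (P : ℕ → ℕ → Prop)
    [∀ i j, Decidable (P i j)] (g : ℕ → ℕ → M) :
    ∑ i ∈ range N, ∑ j ∈ (range N).filter (P i), g i j
      = ∑ j ∈ range N, ∑ i ∈ (range N).filter (fun i => P i j), g i j := by
  simp only [Finset.sum_filter]
  exact Finset.sum_comm

lemma choose_mul_choose_symm {M n j : ℕ} (h : n + j ≤ M) :
    M.choose n * (M - n).choose j = M.choose j * (M - j).choose n := by
  have h1 := Nat.choose_mul (n := M) (Nat.le_add_right n j)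
  have h2 := Nat.choose_mul (n := M) (Nat.le_add_left j n)
  have e1 : n + j - n = j := by omega
  have e2 : n + j - j = n := by omega
  rw [e1] at h1; rw [e2] at h2
  have e3 : (n + j).choose n = (n + j).choose j := by
    rw [← Nat.choose_symm (Nat.le_add_left j n)]; congr 1; omega
  rw [e3] at h1
  omega

lemma vandermonde_aux (k l n : ℕ) :
    ∑ r ∈ range (n + 1), (r.choose k) * ((n - r).choose l) = (n + 1).choose (k + l + 1) := by
  induction n generalizing l with
  | zero =>
    simp only [zero_add, Finset.sum_range_one, Nat.sub_self]
    cases k with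
    | zero =>
      cases l with
      | zero => rfl
      | succ l =>
        rw [Nat.choose_zero_right,
          Nat.choose_eq_zero_of_lt (show (0:ℕ) < l + 1 by omega),
          Nat.choose_eq_zero_of_lt (show (1:ℕ) < 0 + (l+1) + 1 by omega)]
    | succ k =>
      rw [Nat.choose_eq_zero_of_lt (show (0:ℕ) < k + 1 by omega),
        Nat.choose_eq_zero_of_lt (show (1:ℕ) < (k+1) + l + 1 by omega), Nat.zero_mul]
  | succ n ih =>
    rw [Finset.sum_range_succ, Nat.sub_self]
    cases l with
    | zero =>
      have hc : ∀ r ∈ range (n+1), (r.choose k) * ((n + 1 - r).choose 0)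
          = (r.choose k) * ((n - r).choose 0) := by intro r _; simp
      rw [Finset.sum_congr rfl hc, ih 0]
      simp only [Nat.choose_zero_right, Nat.mul_one, Nat.add_zero]
      have hp := Nat.choose_succ_succ' (n+1) k
      omega
    | succ l =>
      have hc : ∀ r ∈ range (n+1), (r.choose k) * ((n + 1 - r).choose (l+1))
          = (r.choose k) * ((n - r).choose (l+1)) + (r.choose k) * ((n - r).choose l) := by
        intro r hr
        rw [Finset.mem_range] at hr
        have he : n + 1 - r = (n - r) + 1 := by omega
        rw [he, Nat.choose_succ_succ']
        ring
      rw [Finset.sum_congr rfl hc, Finset.sum_add_distrib, ih (l+1), ih l,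
        Nat.choose_eq_zero_of_lt (show (0:ℕ) < l + 1 by omega), Nat.mul_zero, Nat.add_zero]
      simp only [← Nat.add_assoc]
      have hp := Nat.choose_succ_succ' (n+1) (k+l+1)
      omega

lemma vandermonde_icc {μ t k : ℕ} (hkt : k ≤ t) (htμ : t ≤ μ) :
    ∑ s ∈ Icc k t, (s.choose k) * ((μ - s).choose (μ - t)) = (μ + 1).choose (t - k) := by
  have h0 : ∑ s ∈ range (μ + 1), (s.choose k) * ((μ - s).choose (μ - t))
      = (μ + 1).choose (k + (μ - t) + 1) := vandermonde_aux k (μ - t) μ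
  have hsub : Icc k t ⊆ range (μ + 1) := by
    intro s hs; rw [Finset.mem_Icc] at hs; rw [Finset.mem_range]; omega
  have hz : ∀ s ∈ range (μ + 1), s ∉ Icc k t →
      (s.choose k) * ((μ - s).choose (μ - t)) = 0 := by
    intro s hs hns
    rw [Finset.mem_range] at hs; rw [Finset.mem_Icc] at hns
    rcases lt_or_ge s k with h | h
    · rw [Nat.choose_eq_zero_of_lt h]; ring
    · rw [Nat.choose_eq_zero_of_lt (show μ - s < μ - t by omega)]; ring
  rw [Finset.sum_subset hsub hz, h0]
  have he : k + (μ - t) + 1 = μ + 1 - (t - k) := by omega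
  rw [he, Nat.choose_symm (by omega)]

lemma neg_one_pow_sub_c {a b : ℕ} (h : b ≤ a) : (-1 : ℂ) ^ (a - b) = (-1) ^ a * (-1) ^ b := by
  have h2 : (-1 : ℂ) ^ b * (-1) ^ b = 1 := by
    rw [← pow_add]; exact Even.neg_one_pow ⟨b, by omega⟩
  calc (-1 : ℂ) ^ (a - b) = (-1 : ℂ) ^ (a - b) * ((-1) ^ b * (-1) ^ b) := by rw [h2, mul_one]
    _ = ((-1 : ℂ) ^ (a - b) * (-1) ^ b) * (-1) ^ b := by ring
    _ = (-1) ^ a * (-1) ^ b := by rw [← pow_add, Nat.sub_add_cancel h]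


noncomputable def Dop (f : ℕ → ℂ) : ℕ → ℂ := fun x => f (x + 1) - f x

lemma Dop_add (f g : ℕ → ℂ) : Dop (fun x => f x + g x) = fun x => Dop f x + Dop g x := by
  funext x; simp [Dop]; ring

lemma Dop_iter_add (s : ℕ) (f g : ℕ → ℂ) :
    Dop^[s] (fun x => f x + g x) = fun x => Dop^[s] f x + Dop^[s] g x := by
  induction s generalizing f g with
  | zero => simp
  | succ s ih =>
    rw [Function.iterate_succ_apply, Function.iterate_succ_apply,
      Function.iterate_succ_apply, Dop_add, ih]

lemma Dop_shift (a : ℕ) (f : ℕ → ℂ) : Dop (fun x => f (x + a)) = fun x => Dop f (x + a) := by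
  funext x; simp only [Dop]; rw [show x + 1 + a = x + a + 1 by omega]

lemma Dop_iter_shift (s a : ℕ) (f : ℕ → ℂ) :
    Dop^[s] (fun x => f (x + a)) = fun x => Dop^[s] f (x + a) := by
  induction s generalizing f with
  | zero => simp
  | succ s ih =>
    rw [Function.iterate_succ_apply, Function.iterate_succ_apply, Dop_shift, ih]

lemma pow_succ_sub_pow (y : ℂ) (j : ℕ) :
    (y + 1) ^ j - y ^ j = ∑ t ∈ range j, (j.choose t) * y ^ t := by
  have hb : (y + 1) ^ j = ∑ t ∈ range (j + 1), y ^ t * 1 ^ (j - t) * (j.choose t) :=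
    add_pow y 1 j
  rw [hb, Finset.sum_range_succ]
  simp only [one_pow, Nat.choose_self, Nat.cast_one, mul_one, Nat.sub_self]
  rw [add_sub_cancel_right]
  apply Finset.sum_congr rfl
  intro t _
  ring

lemma Dop_poly_step (N : ℕ) (c : ℕ → ℂ) (y : ℕ) :
    Dop (fun x => ∑ j ∈ range (N + 2), c j * (x : ℂ) ^ j) y
      = ∑ t ∈ range (N + 1),
          (∑ j ∈ (range (N + 2)).filter (fun j => t < j), c j * (j.choose t)) * (y : ℂ) ^ t := by
  have step1 : Dop (fun x => ∑ j ∈ range (N + 2), c j * (x : ℂ) ^ j) y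
      = ∑ j ∈ range (N + 2), ∑ t ∈ (range (N + 2)).filter (fun t => t < j),
          (c j * (j.choose t)) * (y : ℂ) ^ t := by
    simp only [Dop]
    rw [← Finset.sum_sub_distrib]
    apply Finset.sum_congr rfl
    intro j hj
    rw [Finset.mem_range] at hj
    have hfil : (range (N + 2)).filter (fun t => t < j) = range j := by
      ext t; simp only [Finset.mem_filter, Finset.mem_range]; omega
    rw [hfil]
    push_cast
    rw [← mul_sub, pow_succ_sub_pow (y : ℂ) j, Finset.mul_sum]
    apply Finset.sum_congr rfl
    intro t _
    ring
  rw [step1, swap_filter_sum (N + 2) (fun j t => t < j) (fun j t => (c j * (j.choose t)) * (y:ℂ)^t)]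
  rw [Finset.sum_range_succ]
  have hz : (range (N + 2)).filter (fun j => N + 1 < j) = ∅ := by
    ext j; simp only [Finset.mem_filter, Finset.mem_range, Finset.notMem_empty, iff_false]
    omega
  rw [hz]
  simp only [Finset.sum_empty, zero_mul, add_zero]
  apply Finset.sum_congr rfl
  intro t _
  rw [Finset.sum_mul]

lemma Dop_iter_poly_zero : ∀ (N : ℕ) (f : ℕ → ℂ),
    (∃ c : ℕ → ℂ, ∀ x : ℕ, f x = ∑ j ∈ range (N + 1), c j * (x : ℂ) ^ j) →
    ∀ x, Dop^[N + 1] f x = 0 := by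
  intro N
  induction N with
  | zero =>
    rintro f ⟨c, hc⟩ x
    rw [Function.iterate_one]
    simp only [Dop, hc]
    norm_num
  | succ N ih =>
    rintro f ⟨c, hc⟩ x
    rw [Function.iterate_succ_apply]
    apply ih
    refine ⟨fun t => ∑ j ∈ (range (N + 2)).filter (fun j => t < j), c j * (j.choose t), ?_⟩
    intro y
    have hfeq : Dop f = Dop (fun x => ∑ j ∈ range (N + 2), c j * (x : ℂ) ^ j) := by
      funext z; simp only [Dop, hc]
    rw [hfeq, Dop_poly_step]

lemma Dop_iter_formula (s : ℕ) (f : ℕ → ℂ) (x : ℕ) :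
    Dop^[s] f x = ∑ j ∈ range (s + 1), (-1 : ℂ) ^ (s - j) * (s.choose j) * f (x + j) := by
  induction s generalizing f with
  | zero => simp
  | succ s ih =>
    rw [Function.iterate_succ_apply, ih (Dop f)]
    have hexp : ∀ j ∈ range (s+1), (-1 : ℂ) ^ (s - j) * (s.choose j) * (Dop f) (x + j)
        = (-1:ℂ)^(s-j) * (s.choose j) * f (x + j + 1)
          - (-1:ℂ)^(s-j) * (s.choose j) * f (x + j) := by
      intro j _; simp only [Dop]; ring
    rw [Finset.sum_congr rfl hexp, Finset.sum_sub_distrib]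
    have htar : ∑ j ∈ range (s + 2), (-1 : ℂ) ^ (s + 1 - j) * ((s+1).choose j) * f (x + j)
        = (∑ j ∈ range (s+1), ((-1 : ℂ) ^ (s - j) * ((s).choose j) * f (x + j + 1)
            + (-1 : ℂ) ^ (s - j) * ((s).choose (j+1)) * f (x + j + 1)))
          + (-1:ℂ)^(s+1) * f x := by
      rw [Finset.sum_range_succ'
        (fun j => (-1 : ℂ) ^ (s + 1 - j) * ((s+1).choose j) * f (x + j)) (s+1)]
      congr 1
      · apply Finset.sum_congr rfl
        intro j hj
        rw [Finset.mem_range] at hj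
        rw [show s + 1 - (j + 1) = s - j by omega, Nat.choose_succ_succ']
        push_cast
        rw [show x + (j + 1) = x + j + 1 by omega]
        ring
      · simp
    rw [htar, Finset.sum_add_distrib]
    have h2 : ∑ j ∈ range (s+1), (-1:ℂ)^(s-j) * (s.choose (j+1)) * f (x + j + 1)
        = - ((-1:ℂ)^(s+1) * f x) - ∑ j ∈ range (s+1), (-1:ℂ)^(s-j) * (s.choose j) * f (x + j) := by
      have hh : ∑ j ∈ range (s + 2), (-1 : ℂ) ^ (s + 1 - j) * ((s).choose j) * f (x + j)
          = (∑ j ∈ range (s+1), (-1 : ℂ) ^ (s - j) * ((s).choose (j+1)) * f (x + j + 1))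
            + (-1:ℂ)^(s+1) * f x := by
        rw [Finset.sum_range_succ'
          (fun j => (-1 : ℂ) ^ (s + 1 - j) * ((s).choose j) * f (x + j)) (s+1)]
        congr 1
        · apply Finset.sum_congr rfl
          intro j hj
          rw [Finset.mem_range] at hj
          rw [show s + 1 - (j + 1) = s - j by omega, show x + (j + 1) = x + j + 1 by omega]
        · simp
      have hh2 : ∑ j ∈ range (s + 2), (-1 : ℂ) ^ (s + 1 - j) * ((s).choose j) * f (x + j)
          = ∑ j ∈ range (s+1), (-1 : ℂ) ^ (s + 1 - j) * ((s).choose j) * f (x + j) := by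
        rw [Finset.sum_range_succ, Nat.choose_eq_zero_of_lt (show s < s + 1 by omega)]
        simp
      have hh3 : ∑ j ∈ range (s+1), (-1 : ℂ) ^ (s + 1 - j) * ((s).choose j) * f (x + j)
          = - ∑ j ∈ range (s+1), (-1 : ℂ) ^ (s - j) * ((s).choose j) * f (x + j) := by
        rw [← Finset.sum_neg_distrib]
        apply Finset.sum_congr rfl
        intro j hj
        rw [Finset.mem_range] at hj
        rw [show s + 1 - j = (s - j) + 1 by omega, pow_succ]
        ring
      rw [hh2, hh3] at hh
      linear_combination -hh
    rw [h2]
    ring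

section abel
variable {a : ℕ} {lam : ℂ} (hla : lam ^ a = 1)

lemma abel_step (f : ℕ → ℂ) (hla : lam ^ a = 1) :
    (lam - 1) * ∑ i ∈ range a, lam ^ i * f i
      = -(lam * ∑ i ∈ range a, lam ^ i * (Dop f) i) + (f a - f 0) := by
  have h1 := Finset.sum_range_succ' (fun i => lam ^ i * f i) a
  have h2 := Finset.sum_range_succ (fun i => lam ^ i * f i) a
  have h3 : ∑ i ∈ range a, lam ^ (i + 1) * f (i + 1)
      = lam * ∑ i ∈ range a, lam ^ i * f (i + 1) := by
    rw [Finset.mul_sum]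
    apply Finset.sum_congr rfl
    intro i _
    rw [pow_succ]
    ring
  rw [h3] at h1
  rw [hla] at h2
  have key : lam * ∑ i ∈ range a, lam ^ i * f (i + 1) + lam ^ 0 * f 0
      = ∑ i ∈ range a, lam ^ i * f i + 1 * f a := h1.symm.trans h2
  have hD : ∑ i ∈ range a, lam ^ i * (Dop f) i
      = ∑ i ∈ range a, lam ^ i * f (i + 1) - ∑ i ∈ range a, lam ^ i * f i := by
    rw [← Finset.sum_sub_distrib]
    apply Finset.sum_congr rfl
    intro i _
    simp only [Dop]
    ring
  rw [hD]
  simp only [pow_zero, one_mul] at key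
  linear_combination key

lemma abel_iter (f : ℕ → ℂ) (hla : lam ^ a = 1) (r : ℕ) :
    (lam - 1) ^ r * ∑ i ∈ range a, lam ^ i * f i
      = (-lam) ^ r * ∑ i ∈ range a, lam ^ i * (Dop^[r] f) i
        + ∑ s ∈ range r, (-lam) ^ s * (lam - 1) ^ (r - 1 - s) * ((Dop^[s] f) a - (Dop^[s] f) 0) := by
  induction r with
  | zero => simp
  | succ r ih =>
    have hmul : (lam - 1) ^ (r + 1) * ∑ i ∈ range a, lam ^ i * f i
        = (lam - 1) * ((lam - 1) ^ r * ∑ i ∈ range a, lam ^ i * f i) := by ring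
    rw [hmul, ih, mul_add]
    have hstep := abel_step (Dop^[r] f) hla
    have hD : Dop (Dop^[r] f) = Dop^[r + 1] f := (Function.iterate_succ_apply' Dop r f).symm
    rw [hD] at hstep
    have hbnd : ∑ s ∈ range (r + 1), (-lam) ^ s * (lam - 1) ^ (r + 1 - 1 - s)
          * ((Dop^[s] f) a - (Dop^[s] f) 0)
        = (lam - 1) * ∑ s ∈ range r, (-lam) ^ s * (lam - 1) ^ (r - 1 - s)
            * ((Dop^[s] f) a - (Dop^[s] f) 0)
          + (-lam) ^ r * ((Dop^[r] f) a - (Dop^[r] f) 0) := by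
      rw [Finset.sum_range_succ]
      congr 1
      · rw [Finset.mul_sum]
        apply Finset.sum_congr rfl
        intro s hs
        rw [Finset.mem_range] at hs
        rw [show r + 1 - 1 - s = (r - 1 - s) + 1 by omega, pow_succ]
        ring
      · rw [show r + 1 - 1 - r = 0 by omega, pow_zero]
        ring
    rw [hbnd]
    have hlhs : (lam - 1) * ((-lam) ^ r * ∑ i ∈ range a, lam ^ i * (Dop^[r] f) i)
        = (-lam) ^ r * ((lam - 1) * ∑ i ∈ range a, lam ^ i * (Dop^[r] f) i) := by ring
    rw [hlhs, hstep]
    ring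
end abel

noncomputable def Bterm (μ : ℕ) (z : ℂ) (s u k : ℕ) : ℂ :=
  (-1:ℂ)^μ * (-1)^s * (-1)^u * (-1)^k * z^(s+u) * (((μ-s).choose u : ℕ) : ℂ)
    * ((s.choose k : ℕ) : ℂ) * (k:ℂ)^μ

lemma eulerian_identity (μ : ℕ) (hμ : 0 < μ) (z : ℂ) :
    ∑ s ∈ range (μ+1), (-z)^s * (z-1)^(μ-s)
        * (∑ k ∈ range (s+1), (-1:ℂ)^(s-k) * ((s.choose k : ℕ) : ℂ) * (k:ℂ)^μ)
      = (-1:ℂ)^μ * ∑ j ∈ range μ, (eulerianNum μ j : ℂ) * z^(j+1) := by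
  have step1 : ∀ s ∈ range (μ+1), (-z)^s * (z-1)^(μ-s)
        * (∑ k ∈ range (s+1), (-1:ℂ)^(s-k) * ((s.choose k : ℕ) : ℂ) * (k:ℂ)^μ)
      = ∑ u ∈ range (μ+1-s), ∑ k ∈ range (s+1), Bterm μ z s u k := by
    intro s hs
    rw [Finset.mem_range] at hs
    have hexp : (z - 1)^(μ-s)
        = ∑ u ∈ range (μ-s+1), z^u * (-1:ℂ)^(μ-s-u) * (((μ-s).choose u : ℕ) : ℂ) := by
      rw [sub_eq_add_neg]
      exact add_pow z (-1) (μ-s)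
    have hrange : μ - s + 1 = μ + 1 - s := by omega
    rw [hexp, hrange]
    have hL : (-z)^s * (∑ u ∈ range (μ+1-s), z^u * (-1:ℂ)^(μ-s-u) * (((μ-s).choose u : ℕ) : ℂ))
        = ∑ u ∈ range (μ+1-s), (-z)^s * (z^u * (-1:ℂ)^(μ-s-u) * (((μ-s).choose u : ℕ) : ℂ)) :=
      Finset.mul_sum _ _ _
    rw [hL, Finset.sum_mul_sum]
    apply Finset.sum_congr rfl
    intro u hu
    apply Finset.sum_congr rfl
    intro k hk
    rw [Finset.mem_range] at hu hk
    have h1 : (-1:ℂ)^(μ-s-u) = (-1)^μ * ((-1)^s * (-1)^u) := by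
      rw [show μ - s - u = μ - (s + u) by omega, neg_one_pow_sub_c (show s + u ≤ μ by omega),
        pow_add]
    have h2 : (-1:ℂ)^(s-k) = (-1)^s * (-1)^k := neg_one_pow_sub_c (by omega)
    have hss : (-1:ℂ)^s * (-1)^s = 1 := by
      rw [← pow_add]; exact Even.neg_one_pow ⟨s, by omega⟩
    rw [h1, h2, neg_pow]
    calc ((-1:ℂ)^s * z^s) * (z^u * ((-1)^μ * ((-1)^s * (-1)^u)) * (((μ-s).choose u : ℕ) : ℂ))
          * (((-1:ℂ)^s * (-1)^k) * ((s.choose k : ℕ) : ℂ) * (k:ℂ)^μ)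
        = ((-1:ℂ)^s * (-1)^s) * ((-1:ℂ)^μ * (-1)^s * (-1)^u * (-1)^k * (z^s * z^u)
            * (((μ-s).choose u : ℕ) : ℂ) * ((s.choose k : ℕ) : ℂ) * (k:ℂ)^μ) := by ring
      _ = Bterm μ z s u k := by
          rw [hss, one_mul, show z^s*z^u = z^(s+u) from (pow_add z s u).symm]
          simp only [Bterm]
  rw [Finset.sum_congr rfl step1]
  have step2 : ∀ s ∈ range (μ+1), ∑ u ∈ range (μ+1-s), ∑ k ∈ range (s+1), Bterm μ z s u k
      = ∑ t ∈ (range (μ+1)).filter (fun t => s ≤ t),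
          ∑ k ∈ range (s+1), Bterm μ z s (t-s) k := by
    intro s hs
    rw [Finset.mem_range] at hs
    have hfil : (range (μ+1)).filter (fun t => s ≤ t) = Ico s (μ+1) := by
      ext t; simp only [Finset.mem_filter, Finset.mem_range, Finset.mem_Ico]; omega
    rw [hfil, Finset.sum_Ico_eq_sum_range, show μ + 1 - s = μ + 1 - s from rfl]
    apply Finset.sum_congr rfl
    intro u _
    rw [show s + u - s = u by omega]
  rw [Finset.sum_congr rfl step2,
    swap_filter_sum (μ+1) (fun s t => s ≤ t)
      (fun s t => ∑ k ∈ range (s+1), Bterm μ z s (t-s) k)]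
  have step3 : ∀ t ∈ range (μ+1),
      ∑ s ∈ (range (μ+1)).filter (fun s => s ≤ t), ∑ k ∈ range (s+1), Bterm μ z s (t-s) k
      = z^t * ((-1:ℂ)^μ * (-1)^t)
          * ∑ k ∈ range (t+1), (-1:ℂ)^k * (((μ+1).choose (t-k) : ℕ) : ℂ) * (k:ℂ)^μ := by
    intro t ht
    rw [Finset.mem_range] at ht
    have hfil : (range (μ+1)).filter (fun s => s ≤ t) = range (t+1) := by
      ext s; simp only [Finset.mem_filter, Finset.mem_range]; omega
    rw [hfil]
    have hinner : ∀ s ∈ range (t+1), ∑ k ∈ range (s+1), Bterm μ z s (t-s) k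
        = ∑ k ∈ (range (t+1)).filter (fun k => k ≤ s), Bterm μ z s (t-s) k := by
      intro s hs
      rw [Finset.mem_range] at hs
      congr 1
      ext k; simp only [Finset.mem_filter, Finset.mem_range]; omega
    rw [Finset.sum_congr rfl hinner,
      swap_filter_sum (t+1) (fun s k => k ≤ s) (fun s k => Bterm μ z s (t-s) k),
      Finset.mul_sum]
    apply Finset.sum_congr rfl
    intro k hk
    rw [Finset.mem_range] at hk
    have hfil2 : (range (t+1)).filter (fun s => k ≤ s) = Icc k t := by
      ext s; simp only [Finset.mem_filter, Finset.mem_range, Finset.mem_Icc]; omega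
    rw [hfil2]
    have hB : ∀ s ∈ Icc k t, Bterm μ z s (t-s) k
        = ((-1:ℂ)^μ * (-1)^t * (-1)^k * z^t * (k:ℂ)^μ)
            * ((((s.choose k) * ((μ-s).choose (μ-t)) : ℕ)) : ℂ) := by
      intro s hsic
      rw [Finset.mem_Icc] at hsic
      have hsy : (μ - s).choose (t - s) = (μ - s).choose (μ - t) := by
        rw [← Nat.choose_symm (show t - s ≤ μ - s by omega)]
        congr 1
        omega
      have hss : (-1 : ℂ) ^ s * (-1) ^ s = 1 := by
        rw [← pow_add]; exact Even.neg_one_pow ⟨s, by omega⟩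
      have hsg : (-1:ℂ)^(t-s) = (-1)^t * (-1)^s := neg_one_pow_sub_c (by omega)
      simp only [Bterm]
      rw [show s + (t - s) = t by omega, hsg, hsy, Nat.cast_mul]
      calc (-1:ℂ)^μ * (-1)^s * ((-1)^t * (-1)^s) * (-1)^k * z^t
            * (((μ-s).choose (μ-t) : ℕ) : ℂ) * ((s.choose k : ℕ) : ℂ) * (k:ℂ)^μ
          = ((-1:ℂ)^s * (-1)^s) * ((-1:ℂ)^μ * (-1)^t * (-1)^k * z^t * (k:ℂ)^μ
              * (((s.choose k : ℕ) : ℂ) * (((μ-s).choose (μ-t) : ℕ) : ℂ))) := by ring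
        _ = _ := by rw [hss, one_mul, mul_assoc]
    rw [Finset.sum_congr rfl hB, ← Finset.mul_sum, ← Nat.cast_sum,
      vandermonde_icc (show k ≤ t by omega) (show t ≤ μ by omega)]
    ring
  rw [Finset.sum_congr rfl step3]
  have step4 : ∀ j ∈ range μ,
      (-1:ℂ)^(j+1) * ∑ k ∈ range (j+1+1), (-1:ℂ)^k * (((μ+1).choose (j+1-k) : ℕ) : ℂ) * (k:ℂ)^μ
      = (eulerianNum μ j : ℂ) := by
    intro j hj
    rw [Finset.mem_range] at hj
    have he : (eulerianNum μ j : ℂ)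
        = ∑ q ∈ range (j+1), (-1:ℂ)^q * (((μ+1).choose q : ℕ) : ℂ) * (((j+1-q : ℕ)) : ℂ)^μ := by
      rw [eulerianNum]
      push_cast
      apply Finset.sum_congr rfl
      intro q hq
      rw [Finset.mem_range] at hq
      have hc : (((j+1-q : ℕ)) : ℂ) = ((j - q : ℕ) : ℂ) + 1 := by
        rw [show j+1-q = (j-q)+1 by omega]
        push_cast
        ring
      rw [hc]
    have he2 : (eulerianNum μ j : ℂ)
        = ∑ q ∈ range (j+1), (-1:ℂ)^(j+1-1-q) * (((μ+1).choose (j+1-1-q) : ℕ) : ℂ)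
            * (((j+1-(j+1-1-q) : ℕ)) : ℂ)^μ :=
      he.trans (Finset.sum_range_reflect
        (fun q => (-1:ℂ)^q * (((μ+1).choose q : ℕ) : ℂ) * (((j+1-q : ℕ)) : ℂ)^μ) (j+1)).symm
    rw [he2]
    rw [Finset.mul_sum,
      Finset.sum_range_succ' (fun k => (-1:ℂ)^(j+1)
        * ((-1:ℂ)^k * (((μ+1).choose (j+1-k) : ℕ) : ℂ) * (k:ℂ)^μ)) (j+1)]
    have hz0 : (-1:ℂ)^(j+1) * ((-1:ℂ)^0 * (((μ+1).choose (j+1-0) : ℕ) : ℂ) * ((0:ℕ):ℂ)^μ)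
        = 0 := by
      rw [Nat.cast_zero, zero_pow (by omega)]
      ring
    rw [hz0, add_zero]
    apply Finset.sum_congr rfl
    intro k hk
    rw [Finset.mem_range] at hk
    rw [show j + 1 - 1 - k = j - k by omega, show j + 1 - (j - k) = k + 1 by omega,
      show j + 1 - (k + 1) = j - k by omega]
    have h1 : (-1:ℂ)^(j-k) = ((-1)^j * (-1)^k : ℂ) := neg_one_pow_sub_c (by omega)
    rw [h1]
    push_cast
    ring
  rw [Finset.sum_range_succ' (fun t => z^t * ((-1:ℂ)^μ * (-1)^t)
    * ∑ k ∈ range (t+1), (-1:ℂ)^k * (((μ+1).choose (t-k) : ℕ) : ℂ) * (k:ℂ)^μ) μ]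
  have hz0 : z^0 * ((-1:ℂ)^μ * (-1)^0)
      * (∑ k ∈ range (0+1), (-1:ℂ)^k * (((μ+1).choose (0-k) : ℕ) : ℂ) * (k:ℂ)^μ) = 0 := by
    rw [Finset.sum_range_one]
    rw [Nat.cast_zero, zero_pow (by omega)]
    ring
  rw [hz0, add_zero, Finset.mul_sum]
  apply Finset.sum_congr rfl
  intro j hj
  have h4 := step4 j hj
  calc z^(j+1) * ((-1:ℂ)^μ * (-1)^(j+1))
        * ∑ k ∈ range (j+1+1), (-1:ℂ)^k * (((μ+1).choose (j+1-k) : ℕ) : ℂ) * (k:ℂ)^μ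
      = ((-1:ℂ)^μ * z^(j+1)) * ((-1:ℂ)^(j+1)
        * ∑ k ∈ range (j+1+1), (-1:ℂ)^k * (((μ+1).choose (j+1-k) : ℕ) : ℂ) * (k:ℂ)^μ) := by ring
    _ = _ := by rw [h4]; ring

noncomputable def Fc (a μ x : ℕ) : ℂ :=
  (1/((μ:ℂ)+1)) * ∑ n ∈ range (μ+1), ((μ+1).choose n : ℂ) * ((bernoulli n : ℚ) : ℂ)
    * (a:ℂ)^((n:ℤ)-1) * (x:ℂ)^(μ+1-n)

lemma sum_bernoulli_c (N : ℕ) :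
    ∑ n ∈ range N, (N.choose n : ℂ) * ((bernoulli n : ℚ) : ℂ) = if N = 1 then 1 else 0 := by
  have h := sum_bernoulli N
  have h2 : (((∑ n ∈ range N, (N.choose n : ℚ) * bernoulli n) : ℚ) : ℂ)
      = (((if N = 1 then (1:ℚ) else 0) : ℚ) : ℂ) := by rw [h]
  push_cast at h2
  have h3 : (((if N = 1 then (1:ℚ) else 0) : ℚ) : ℂ) = (if N = 1 then (1:ℂ) else 0) := by
    split_ifs <;> simp
  rw [h3] at h2
  exact h2

lemma pow_add_sub_pow (X A : ℂ) (M : ℕ) :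
    (X + A)^M - X^M = ∑ t ∈ range M, (M.choose t : ℂ) * X^t * A^(M-t) := by
  rw [add_pow, Finset.sum_range_succ]
  simp only [Nat.choose_self, Nat.cast_one, mul_one, Nat.sub_self, pow_zero]
  rw [add_sub_cancel_right]
  apply Finset.sum_congr rfl
  intro t _
  ring

lemma Fc_eq {a : ℕ} (ha : (a:ℂ) ≠ 0) (μ x : ℕ) :
    Fc a μ x = (∑ n ∈ range (μ+1), ((μ+1).choose n : ℂ) * ((bernoulli n : ℚ) : ℂ)
      * (a:ℂ)^n * (x:ℂ)^(μ+1-n)) / (((μ:ℂ)+1) * a) := by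
  rw [Fc, Finset.sum_div, Finset.mul_sum]
  apply Finset.sum_congr rfl
  intro n _
  have hz : (a:ℂ)^((n:ℤ)-1) = (a:ℂ)^n / a := by
    rw [zpow_sub₀ ha, zpow_natCast, zpow_one]
  rw [hz]
  have hμ1 : ((μ:ℂ)+1) ≠ 0 := by
    have h4 : ((μ+1:ℕ):ℂ) ≠ 0 := Nat.cast_ne_zero.mpr (by omega)
    push_cast at h4
    exact h4
  field_simp

lemma Fc_step {a μ : ℕ} (ha0 : 0 < a) (hμ : 0 < μ) (x : ℕ) :
    Fc a μ (x + a) - Fc a μ x = (x:ℂ)^μ := by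
  have ha : (a:ℂ) ≠ 0 := by
    simp only [ne_eq, Nat.cast_eq_zero]
    omega
  have hμ1 : ((μ:ℂ)+1) ≠ 0 := by
    have h4 : ((μ+1:ℕ):ℂ) ≠ 0 := Nat.cast_ne_zero.mpr (by omega)
    push_cast at h4
    exact h4
  rw [Fc_eq ha, Fc_eq ha, div_sub_div_same]
  have hnum : ∑ n ∈ range (μ+1), ((μ+1).choose n : ℂ) * ((bernoulli n : ℚ) : ℂ)
        * (a:ℂ)^n * (((x+a:ℕ)):ℂ)^(μ+1-n)
      - ∑ n ∈ range (μ+1), ((μ+1).choose n : ℂ) * ((bernoulli n : ℚ) : ℂ)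
        * (a:ℂ)^n * ((x:ℕ):ℂ)^(μ+1-n)
      = (x:ℂ)^μ * (((μ:ℂ)+1) * a) := by
    rw [← Finset.sum_sub_distrib]
    have hterm : ∀ n ∈ range (μ+1),
        ((μ+1).choose n : ℂ) * ((bernoulli n : ℚ) : ℂ) * (a:ℂ)^n * (((x+a:ℕ)):ℂ)^(μ+1-n)
          - ((μ+1).choose n : ℂ) * ((bernoulli n : ℚ) : ℂ) * (a:ℂ)^n * ((x:ℕ):ℂ)^(μ+1-n)
        = ∑ t ∈ (range (μ+1)).filter (fun t => t < μ+1-n),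
            (((μ+1).choose n : ℂ) * ((bernoulli n : ℚ) : ℂ) * ((μ+1-n).choose t : ℂ)
              * (a:ℂ)^(μ+1-t)) * (x:ℂ)^t := by
      intro n hn
      rw [Finset.mem_range] at hn
      have hc : ((x+a:ℕ):ℂ) = (x:ℂ) + (a:ℂ) := by push_cast; ring
      rw [hc, ← mul_sub, pow_add_sub_pow (x:ℂ) (a:ℂ) (μ+1-n)]
      have hfil : (range (μ+1)).filter (fun t => t < μ+1-n) = range (μ+1-n) := by
        ext t; simp only [Finset.mem_filter, Finset.mem_range]; omega
      rw [hfil, Finset.mul_sum]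
      apply Finset.sum_congr rfl
      intro t ht
      rw [Finset.mem_range] at ht
      have hpow : (a:ℂ)^n * (a:ℂ)^(μ+1-n-t) = (a:ℂ)^(μ+1-t) := by
        rw [← pow_add]
        congr 1
        omega
      calc ((μ+1).choose n : ℂ) * ((bernoulli n : ℚ) : ℂ) * (a:ℂ)^n
            * (((μ+1-n).choose t : ℂ) * (x:ℂ)^t * (a:ℂ)^(μ+1-n-t))
          = (((μ+1).choose n : ℂ) * ((bernoulli n : ℚ) : ℂ) * ((μ+1-n).choose t : ℂ)
              * ((a:ℂ)^n * (a:ℂ)^(μ+1-n-t))) * (x:ℂ)^t := by ring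
        _ = _ := by rw [hpow]
    rw [Finset.sum_congr rfl hterm,
      swap_filter_sum (μ+1) (fun n t => t < μ+1-n)
        (fun n t => (((μ+1).choose n : ℂ) * ((bernoulli n : ℚ) : ℂ) * ((μ+1-n).choose t : ℂ)
          * (a:ℂ)^(μ+1-t)) * (x:ℂ)^t)]
    have hT : ∀ t ∈ range (μ+1),
        ∑ n ∈ (range (μ+1)).filter (fun n => t < μ+1-n),
          (((μ+1).choose n : ℂ) * ((bernoulli n : ℚ) : ℂ) * ((μ+1-n).choose t : ℂ)
            * (a:ℂ)^(μ+1-t)) * (x:ℂ)^t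
        = (((μ+1).choose t : ℕ) : ℂ) * (if μ+1-t = 1 then 1 else 0)
            * (a:ℂ)^(μ+1-t) * (x:ℂ)^t := by
      intro t ht
      rw [Finset.mem_range] at ht
      have hfil : (range (μ+1)).filter (fun n => t < μ+1-n) = range (μ+1-t) := by
        ext n; simp only [Finset.mem_filter, Finset.mem_range]; omega
      rw [hfil]
      have hcc : ∀ n ∈ range (μ+1-t),
          (((μ+1).choose n : ℂ) * ((bernoulli n : ℚ) : ℂ) * ((μ+1-n).choose t : ℂ)
            * (a:ℂ)^(μ+1-t)) * (x:ℂ)^t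
          = ((((μ+1).choose t : ℕ) : ℂ) * (a:ℂ)^(μ+1-t) * (x:ℂ)^t)
              * (((μ+1-t).choose n : ℂ) * ((bernoulli n : ℚ) : ℂ)) := by
        intro n hn
        rw [Finset.mem_range] at hn
        have hmc : (μ+1).choose n * ((μ+1)-n).choose t = (μ+1).choose t * ((μ+1)-t).choose n :=
          choose_mul_choose_symm (by omega)
        have hmcc : (((μ+1).choose n : ℕ) : ℂ) * (((μ+1-n).choose t : ℕ) : ℂ)
            = (((μ+1).choose t : ℕ) : ℂ) * (((μ+1-t).choose n : ℕ) : ℂ) := by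
          rw [← Nat.cast_mul, ← Nat.cast_mul, hmc]
        calc (((μ+1).choose n : ℕ) : ℂ) * ((bernoulli n : ℚ) : ℂ) * ((μ+1-n).choose t : ℂ)
              * (a:ℂ)^(μ+1-t) * (x:ℂ)^t
            = ((((μ+1).choose n : ℕ) : ℂ) * (((μ+1-n).choose t : ℕ) : ℂ))
                * (((bernoulli n : ℚ) : ℂ) * (a:ℂ)^(μ+1-t) * (x:ℂ)^t) := by ring
          _ = ((((μ+1).choose t : ℕ) : ℂ) * (((μ+1-t).choose n : ℕ) : ℂ))
                * (((bernoulli n : ℚ) : ℂ) * (a:ℂ)^(μ+1-t) * (x:ℂ)^t) := by rw [hmcc]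
          _ = _ := by ring
      rw [Finset.sum_congr rfl hcc, ← Finset.mul_sum, sum_bernoulli_c (μ+1-t)]
      ring
    rw [Finset.sum_congr rfl hT]
    have hsingle : ∀ t ∈ range (μ+1), t ≠ μ →
        (((μ+1).choose t : ℕ) : ℂ) * (if μ+1-t = 1 then 1 else 0) * (a:ℂ)^(μ+1-t) * (x:ℂ)^t
          = 0 := by
      intro t ht hne
      rw [Finset.mem_range] at ht
      rw [if_neg (by omega)]
      ring
    rw [Finset.sum_eq_single_of_mem μ (Finset.self_mem_range_succ μ) hsingle]
    rw [if_pos (by omega), show μ + 1 - μ = 1 by omega, pow_one]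
    have : (μ+1).choose μ = μ+1 := by
      rw [← Nat.choose_symm (show μ ≤ μ+1 by omega), show μ+1-μ = 1 by omega,
        Nat.choose_one_right]
    rw [this]
    push_cast
    ring
  rw [hnum, mul_div_assoc]
  rw [div_self (by exact mul_ne_zero hμ1 ha), mul_one]

lemma sum_pow_arith {a μ : ℕ} (ha0 : 0 < a) (hμ : 0 < μ) (i : ℕ) :
    ∀ Q : ℕ, ∑ q ∈ range Q, (((i + q*a : ℕ)):ℂ)^μ = Fc a μ (i + Q*a) - Fc a μ i := by
  intro Q
  induction Q with
  | zero => simp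
  | succ Q ih =>
    rw [Finset.sum_range_succ, ih]
    have h1 : i + (Q+1)*a = (i + Q*a) + a := by ring
    rw [h1]
    have h2 := Fc_step ha0 hμ (i + Q*a)
    linear_combination -h2

lemma Fc_zero {a μ : ℕ} (hμ : 0 < μ) : Fc a μ 0 = 0 := by
  rw [Fc]
  have : ∑ n ∈ range (μ+1), ((μ+1).choose n : ℂ) * ((bernoulli n : ℚ) : ℂ)
      * (a:ℂ)^((n:ℤ)-1) * ((0:ℕ):ℂ)^(μ+1-n) = 0 := by
    apply Finset.sum_eq_zero
    intro n hn
    rw [Finset.mem_range] at hn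
    rw [Nat.cast_zero, zero_pow (by omega)]
    ring
  rw [this, mul_zero]

lemma Fc_poly {a μ : ℕ} : ∃ c : ℕ → ℂ, ∀ x : ℕ,
    Fc a μ x = ∑ j ∈ range (μ+2), c j * (x:ℂ)^j := by
  refine ⟨fun j => if j = 0 then 0 else
    (1/((μ:ℂ)+1)) * ((μ+1).choose (μ+1-j) : ℂ) * ((bernoulli (μ+1-j) : ℚ) : ℂ)
      * (a:ℂ)^(((μ+1-j : ℕ):ℤ)-1), ?_⟩
  intro x
  rw [Finset.sum_range_succ'
    (fun j => (if j = 0 then 0 else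
      (1/((μ:ℂ)+1)) * ((μ+1).choose (μ+1-j) : ℂ) * ((bernoulli (μ+1-j) : ℚ) : ℂ)
        * (a:ℂ)^(((μ+1-j : ℕ):ℤ)-1)) * (x:ℂ)^j) (μ+1)]
  rw [if_pos rfl, zero_mul, add_zero]
  rw [Fc, Finset.mul_sum]
  have hrefl := Finset.sum_range_reflect
    (fun n => (1/((μ:ℂ)+1)) * (((μ+1).choose n : ℂ) * ((bernoulli n : ℚ) : ℂ)
      * (a:ℂ)^((n:ℤ)-1) * (x:ℂ)^(μ+1-n))) (μ+1)
  rw [← hrefl]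
  apply Finset.sum_congr rfl
  intro j hj
  rw [Finset.mem_range] at hj
  rw [if_neg (by omega)]
  rw [show μ + 1 - 1 - j = μ - j by omega, show μ + 1 - (μ - j) = j + 1 by omega,
    show μ + 1 - (j+1) = μ - j by omega]
  ring

section comb
variable {a d k : ℕ} (ha : 0 < a) (hk : 2 ≤ k)

lemma repr_zero : Representable (fun j : Fin k => a + (j : ℕ) * d) 0 :=
  ⟨fun _ => 0, by simp⟩

lemma repr_add_a (hk : 2 ≤ k) {n : ℕ} (h : Representable (fun j : Fin k => a + (j : ℕ) * d) n) :
    Representable (fun j : Fin k => a + (j : ℕ) * d) (n + a) := by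
  obtain ⟨x, hx⟩ := h
  have hk0 : 0 < k := by omega
  refine ⟨fun i => x i + (if i = ⟨0, hk0⟩ then 1 else 0), ?_⟩
  have hsum : ∑ i : Fin k, (x i + (if i = ⟨0, hk0⟩ then 1 else 0)) * (a + (i : ℕ) * d)
      = ∑ i : Fin k, x i * (a + (i : ℕ) * d)
        + ∑ i : Fin k, (if i = ⟨0, hk0⟩ then 1 else 0) * (a + (i : ℕ) * d) := by
    rw [← Finset.sum_add_distrib]
    apply Finset.sum_congr rfl
    intro i _
    ring
  have h2 : (∑ i : Fin k, (if i = ⟨0, hk0⟩ then 1 else 0) * (a + (i : ℕ) * d)) = a := by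
    have hcg : ∀ i ∈ Finset.univ, (if i = (⟨0, hk0⟩ : Fin k) then 1 else 0) * (a + (i : ℕ) * d)
        = (if i = (⟨0, hk0⟩ : Fin k) then a + (i : ℕ) * d else 0) := by
      intro i _
      split_ifs <;> simp
    rw [Finset.sum_congr rfl hcg,
      Finset.sum_ite_eq' Finset.univ (⟨0, hk0⟩ : Fin k) (fun i : Fin k => a + (i : ℕ) * d),
      if_pos (Finset.mem_univ _)]
    simp
  rw [hsum, h2]
  have hx' : n = ∑ i : Fin k, x i * (a + (i : ℕ) * d) := hx
  omega
lemma repr_add_mul_a (hk : 2 ≤ k) {n : ℕ} (h : Representable (fun j : Fin k => a + (j : ℕ) * d) n)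
    (t : ℕ) : Representable (fun j : Fin k => a + (j : ℕ) * d) (n + t * a) := by
  induction t with
  | zero => simpa using h
  | succ t ih =>
    have := repr_add_a hk ih
    have he : n + t * a + a = n + (t+1) * a := by ring
    rwa [he] at this

lemma repr_of_mod_zero (hk : 2 ≤ k) {n : ℕ} (h : n % a = 0) :
    Representable (fun j : Fin k => a + (j : ℕ) * d) n := by
  have h3 : a * (n / a) + n % a = n := Nat.div_add_mod n a
  rw [h, Nat.add_zero] at h3
  have h4 : n = 0 + (n / a) * a := by
    rw [Nat.zero_add, Nat.mul_comm]
    exact h3.symm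
  rw [h4]
  exact repr_add_mul_a hk repr_zero (n / a)

end comb

section nrsum
variable {a d k : ℕ} (m : ℕ → ℕ)

lemma mem_NR_iff (ha : 0 < a) (hk : 2 ≤ k)
    (hm : ∀ i ∈ Finset.Icc 1 (a - 1),
      IsLeast {n : ℕ | 0 < n ∧
        Representable (fun j : Fin k => a + (j : ℕ) * d) n ∧ n % a = i} (m i))
    (n : ℕ) :
    n ∈ NRset (fun j : Fin k => a + (j : ℕ) * d)
      ↔ 0 < n ∧ n % a ≠ 0 ∧ n < m (n % a) := by
  have hmlt : n % a < a := Nat.mod_lt n ha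
  constructor
  · rintro ⟨hn0, hnr⟩
    have hmod : n % a ≠ 0 := fun h => hnr (repr_of_mod_zero hk h)
    have hi : n % a ∈ Finset.Icc 1 (a-1) := Finset.mem_Icc.mpr ⟨by omega, by omega⟩
    refine ⟨hn0, hmod, ?_⟩
    by_contra hlt
    push_neg at hlt
    obtain ⟨⟨hm0, hmr, hmm⟩, _⟩ := hm (n % a) hi
    have hme : m (n % a) ≡ n [MOD a] := by
      unfold Nat.ModEq
      rw [hmm]
    obtain ⟨t, ht⟩ := (Nat.modEq_iff_dvd' hlt).mp hme
    have hn_eq : n = m (n % a) + t * a := by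
      rw [Nat.mul_comm]
      omega
    rw [hn_eq] at hnr
    exact hnr (repr_add_mul_a hk hmr t)
  · rintro ⟨hn0, hmod, hlt⟩
    have hi : n % a ∈ Finset.Icc 1 (a-1) := Finset.mem_Icc.mpr ⟨by omega, by omega⟩
    refine ⟨hn0, fun hr => ?_⟩
    have hlb := (hm (n % a) hi).2 ⟨hn0, hr, rfl⟩
    omega

lemma NR_sum_eq (ha : 0 < a) (hk : 2 ≤ k)
    (hm : ∀ i ∈ Finset.Icc 1 (a - 1),
      IsLeast {n : ℕ | 0 < n ∧
        Representable (fun j : Fin k => a + (j : ℕ) * d) n ∧ n % a = i} (m i))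
    (f : ℕ → ℂ) :
    ∑ᶠ n ∈ NRset (fun j : Fin k => a + (j : ℕ) * d), f n
      = ∑ i ∈ Finset.Icc 1 (a-1), ∑ q ∈ range (m i / a), f (i + q * a) := by
  have hQ : ∀ i ∈ Finset.Icc 1 (a-1), m i = i + (m i / a) * a ∧ m i % a = i := by
    intro i hi
    obtain ⟨⟨_, _, hmm⟩, _⟩ := hm i hi
    have h1 := Nat.div_add_mod (m i) a
    rw [hmm, Nat.mul_comm] at h1
    exact ⟨by omega, hmm⟩
  set T : Finset ℕ :=
    (Finset.Icc 1 (a-1)).biUnion (fun i => (range (m i / a)).image (fun q => i + q * a)) with hT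
  have hmemT : ∀ n, n ∈ T ↔ 0 < n ∧ n % a ≠ 0 ∧ n < m (n % a) := by
    intro n
    rw [hT, Finset.mem_biUnion]
    constructor
    · rintro ⟨i, hi, hni⟩
      rw [Finset.mem_image] at hni
      obtain ⟨q, hq, hqe⟩ := hni
      rw [Finset.mem_range] at hq
      rw [Finset.mem_Icc] at hi
      have hmod : n % a = i := by
        rw [← hqe, Nat.add_mul_mod_self_right, Nat.mod_eq_of_lt (by omega)]
      obtain ⟨hQi, _⟩ := hQ i (Finset.mem_Icc.mpr hi)
      have hqa : q * a < (m i / a) * a :=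
        (Nat.mul_lt_mul_right (show 0 < a by omega)).mpr hq
      refine ⟨by omega, by omega, by rw [hmod]; omega⟩
    · rintro ⟨hn0, hmod, hlt⟩
      have hmlt : n % a < a := Nat.mod_lt n ha
      refine ⟨n % a, Finset.mem_Icc.mpr ⟨by omega, by omega⟩, ?_⟩
      rw [Finset.mem_image]
      obtain ⟨hQi, _⟩ := hQ (n % a) (Finset.mem_Icc.mpr ⟨by omega, by omega⟩)
      refine ⟨n / a, ?_, ?_⟩
      · rw [Finset.mem_range]
        have h1 := Nat.div_add_mod n a
        rw [Nat.mul_comm] at h1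
        have h2 : (n / a) * a < (m (n % a) / a) * a := by omega
        exact lt_of_mul_lt_mul_right h2 (Nat.zero_le a)
      · have h1 := Nat.div_add_mod n a
        rw [Nat.mul_comm] at h1
        omega
  have hset : NRset (fun j : Fin k => a + (j : ℕ) * d) = (↑T : Set ℕ) := by
    ext n
    rw [Finset.mem_coe, hmemT n]
    exact mem_NR_iff m ha hk hm n
  rw [hset, finsum_mem_coe_finset, hT]
  rw [Finset.sum_biUnion]
  · apply Finset.sum_congr rfl
    intro i hi
    rw [Finset.mem_Icc] at hi
    rw [Finset.sum_image]
    intro q1 _ q2 _ he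
    have : q1 * a = q2 * a := by simp only at he; omega
    exact Nat.eq_of_mul_eq_mul_right (by omega) this
  · intro i hi j hj hij
    rw [Finset.coe_Icc, Set.mem_Icc] at hi hj
    apply Finset.disjoint_left.mpr
    intro x hxi hxj
    rw [Finset.mem_image] at hxi hxj
    obtain ⟨q1, _, hq1⟩ := hxi
    obtain ⟨q2, _, hq2⟩ := hxj
    apply hij
    have h1 : x % a = i := by
      rw [← hq1, Nat.add_mul_mod_self_right, Nat.mod_eq_of_lt (by omega)]
    have h2 : x % a = j := by
      rw [← hq2, Nat.add_mul_mod_self_right, Nat.mod_eq_of_lt (by omega)]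
    omega

end nrsum


/-- Weighted Sylvester power sum for an arithmetic sequence when `λ^a = 1`,
second form. -/
theorem stmt17 (a d k : ℕ) (ha : 0 < a) (hd : 0 < d)
    (hk : 2 ≤ k) (hka : k ≤ a) (hgcd : Nat.gcd a d = 1)
    (m : ℕ → ℕ)
    (hm : ∀ i ∈ Finset.Icc 1 (a - 1),
      IsLeast {n : ℕ | 0 < n ∧
        Representable (fun j : Fin k => a + (j : ℕ) * d) n ∧ n % a = i} (m i))
    (lam : ℂ) (hl0 : lam ≠ 0) (hl1 : lam ≠ 1) (hla : lam ^ a = 1)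
    (μ : ℕ) (hμ : 0 < μ) :
    ∑ᶠ n ∈ NRset (fun j : Fin k => a + (j : ℕ) * d), lam ^ n * (n : ℂ) ^ μ =
      (1 / ((μ : ℂ) + 1)) * ∑ n ∈ Finset.range (μ + 1),
        ((μ + 1).choose n : ℂ) * ((bernoulli n : ℚ) : ℂ) * (a : ℂ) ^ ((n : ℤ) - 1) *
          ∑ i ∈ Finset.Icc 1 (a - 1), (m i : ℂ) ^ (μ + 1 - n) * lam ^ (m i)
        + ((-1 : ℂ) ^ (μ + 1) / (lam - 1) ^ (μ + 1)) *
            ∑ j ∈ Finset.range μ, (eulerianNum μ j : ℂ) * lam ^ (j + 1) := by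
  have ha2 : 2 ≤ a := le_trans hk hka
  have hl1' : lam - 1 ≠ 0 := sub_ne_zero.mpr hl1
  have hpne : (lam - 1) ^ (μ + 1) ≠ 0 := pow_ne_zero _ hl1'
  -- basic facts about m
  have hQ : ∀ i ∈ Finset.Icc 1 (a-1), m i = i + (m i / a) * a := by
    intro i hi
    obtain ⟨⟨_, _, hmm⟩, _⟩ := hm i hi
    have h1 := Nat.div_add_mod (m i) a
    rw [hmm, Nat.mul_comm] at h1
    omega
  have hlam_m : ∀ i ∈ Finset.Icc 1 (a-1), lam ^ (m i) = lam ^ i := by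
    intro i hi
    rw [hQ i hi, pow_add, show (m i / a) * a = a * (m i / a) by ring, pow_mul, hla,
      one_pow, mul_one]
  -- Step A : finsum to double finset sum
  rw [NR_sum_eq m ha hk hm (fun n => lam ^ n * (n : ℂ) ^ μ)]
  -- Step B : inner sums via Faulhaber
  have hinner : ∀ i ∈ Finset.Icc 1 (a-1),
      ∑ q ∈ range (m i / a), lam ^ (i + q * a) * (((i + q * a : ℕ)) : ℂ) ^ μ
        = lam ^ i * (Fc a μ (m i) - Fc a μ i) := by
    intro i hi
    have hstep : ∀ q ∈ range (m i / a),
        lam ^ (i + q * a) * (((i + q * a : ℕ)) : ℂ) ^ μ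
          = lam ^ i * (((i + q * a : ℕ)) : ℂ) ^ μ := by
      intro q _
      rw [pow_add, show q * a = a * q by ring, pow_mul, hla, one_pow, mul_one]
    rw [Finset.sum_congr rfl hstep, ← Finset.mul_sum,
      sum_pow_arith ha hμ i (m i / a), ← hQ i hi]
  rw [Finset.sum_congr rfl hinner]
  have hsplit : ∑ i ∈ Finset.Icc 1 (a-1), lam ^ i * (Fc a μ (m i) - Fc a μ i)
      = ∑ i ∈ Finset.Icc 1 (a-1), lam ^ i * Fc a μ (m i)
        - ∑ i ∈ Finset.Icc 1 (a-1), lam ^ i * Fc a μ i := by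
    rw [← Finset.sum_sub_distrib]
    apply Finset.sum_congr rfl
    intro i _
    ring
  rw [hsplit]
  -- Step C : first term
  have hRHS1 : ∑ i ∈ Finset.Icc 1 (a-1), lam ^ i * Fc a μ (m i)
      = (1 / ((μ : ℂ) + 1)) * ∑ n ∈ Finset.range (μ + 1),
          ((μ + 1).choose n : ℂ) * ((bernoulli n : ℚ) : ℂ) * (a : ℂ) ^ ((n : ℤ) - 1) *
            ∑ i ∈ Finset.Icc 1 (a - 1), (m i : ℂ) ^ (μ + 1 - n) * lam ^ (m i) := by
    have h1 : ∀ i ∈ Finset.Icc 1 (a-1), lam ^ i * Fc a μ (m i)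
        = ∑ n ∈ range (μ+1), (1 / ((μ : ℂ) + 1))
            * (((μ + 1).choose n : ℂ) * ((bernoulli n : ℚ) : ℂ) * (a : ℂ) ^ ((n : ℤ) - 1)
              * ((m i : ℂ) ^ (μ + 1 - n) * lam ^ (m i))) := by
      intro i hi
      rw [← hlam_m i hi, Fc, Finset.mul_sum, Finset.mul_sum]
      apply Finset.sum_congr rfl
      intro n _
      ring
    rw [Finset.sum_congr rfl h1, Finset.sum_comm, Finset.mul_sum]
    apply Finset.sum_congr rfl
    intro n _
    rw [Finset.mul_sum, Finset.mul_sum]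
  rw [hRHS1]
  -- Step D : second term via Eulerian identity
  have hGIcc : ∑ i ∈ Finset.Icc 1 (a-1), lam ^ i * Fc a μ i
      = ∑ i ∈ range a, lam ^ i * Fc a μ i := by
    rw [Finset.range_eq_Ico,
      Finset.sum_eq_sum_Ico_succ_bot (show 0 < a by omega) (fun i => lam ^ i * Fc a μ i),
      Fc_zero hμ, mul_zero, zero_add]
    apply Finset.sum_congr _ (fun _ _ => rfl)
    ext x
    simp only [Finset.mem_Ico, Finset.mem_Icc]
    omega
  have hDzero : ∀ x, Dop^[μ+2] (Fc a μ) x = 0 :=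
    Dop_iter_poly_zero (μ+1) (Fc a μ) Fc_poly
  have hpowpoly : ∀ x, Dop^[μ+1] (fun y : ℕ => (y:ℂ)^μ) x = 0 := by
    apply Dop_iter_poly_zero μ
    refine ⟨fun j => if j = μ then 1 else 0, ?_⟩
    intro x
    have hcg : ∀ j ∈ range (μ+1), (if j = μ then (1:ℂ) else 0) * (x:ℂ)^j
        = (if j = μ then (x:ℂ)^j else 0) := by
      intro j _
      split_ifs <;> simp
    rw [Finset.sum_congr rfl hcg,
      Finset.sum_ite_eq' (range (μ+1)) μ (fun j => (x:ℂ)^j),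
      if_pos (Finset.self_mem_range_succ μ)]
  have hbd : ∀ s : ℕ, (Dop^[s] (Fc a μ)) a - (Dop^[s] (Fc a μ)) 0
      = Dop^[s] (fun y : ℕ => (y:ℂ)^μ) 0 := by
    intro s
    have hFa : (fun x => Fc a μ (x + a)) = fun x => Fc a μ x + (fun y : ℕ => (y:ℂ)^μ) x := by
      funext x
      have h := Fc_step ha hμ x
      linear_combination h
    have hshift := Dop_iter_shift s a (Fc a μ)
    have hcal : (Dop^[s] (Fc a μ)) a
        = Dop^[s] (Fc a μ) 0 + Dop^[s] (fun y : ℕ => (y:ℂ)^μ) 0 := by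
      calc (Dop^[s] (Fc a μ)) a = (fun x => (Dop^[s] (Fc a μ)) (x + a)) 0 := by simp
        _ = Dop^[s] (fun x => Fc a μ (x + a)) 0 := by rw [hshift]
        _ = Dop^[s] (fun x => Fc a μ x + (fun y : ℕ => (y:ℂ)^μ) x) 0 := by rw [hFa]
        _ = Dop^[s] (Fc a μ) 0 + Dop^[s] (fun y : ℕ => (y:ℂ)^μ) 0 := by
            rw [Dop_iter_add s (Fc a μ) (fun y : ℕ => (y:ℂ)^μ)]
    rw [hcal]
    ring
  have habel := abel_iter (Fc a μ) hla (μ+2)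
  have hz1 : ∑ i ∈ range a, lam ^ i * (Dop^[μ+2] (Fc a μ)) i = 0 :=
    Finset.sum_eq_zero (fun i _ => by rw [hDzero i, mul_zero])
  rw [hz1, mul_zero, zero_add] at habel
  have hbs : ∑ s ∈ range (μ+2), (-lam) ^ s * (lam - 1) ^ (μ+2 - 1 - s)
        * ((Dop^[s] (Fc a μ)) a - (Dop^[s] (Fc a μ)) 0)
      = (lam - 1) * ((-1:ℂ)^μ * ∑ j ∈ range μ, (eulerianNum μ j : ℂ) * lam^(j+1)) := by
    have hc1 : ∀ s ∈ range (μ+2), (-lam) ^ s * (lam - 1) ^ (μ+2 - 1 - s)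
          * ((Dop^[s] (Fc a μ)) a - (Dop^[s] (Fc a μ)) 0)
        = (-lam) ^ s * (lam - 1) ^ (μ+1-s) * (Dop^[s] (fun y : ℕ => (y:ℂ)^μ) 0) := by
      intro s _
      rw [hbd s, show μ + 2 - 1 - s = μ + 1 - s by omega]
    rw [Finset.sum_congr rfl hc1, Finset.sum_range_succ, hpowpoly 0, mul_zero, add_zero]
    have hc2 : ∀ s ∈ range (μ+1), (-lam) ^ s * (lam - 1) ^ (μ+1-s)
          * (Dop^[s] (fun y : ℕ => (y:ℂ)^μ) 0)
        = (lam - 1) * ((-lam) ^ s * (lam - 1) ^ (μ-s)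
            * (∑ t ∈ range (s+1), (-1:ℂ)^(s-t) * ((s.choose t : ℕ) : ℂ) * (t:ℂ)^μ)) := by
      intro s hs
      rw [Finset.mem_range] at hs
      have hform := Dop_iter_formula s (fun y : ℕ => (y:ℂ)^μ) 0
      have hform2 : Dop^[s] (fun y : ℕ => (y:ℂ)^μ) 0
          = ∑ t ∈ range (s+1), (-1:ℂ)^(s-t) * ((s.choose t : ℕ) : ℂ) * (t:ℂ)^μ := by
        rw [hform]
        apply Finset.sum_congr rfl
        intro t _
        rw [Nat.zero_add]
      rw [hform2, show μ + 1 - s = (μ - s) + 1 by omega, pow_succ]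
      ring
    rw [Finset.sum_congr rfl hc2, ← Finset.mul_sum, eulerian_identity μ hμ lam]
  rw [hbs] at habel
  have hG1 : (lam - 1) ^ (μ+1) * (∑ i ∈ range a, lam ^ i * Fc a μ i)
      = (-1:ℂ)^μ * ∑ j ∈ range μ, (eulerianNum μ j : ℂ) * lam^(j+1) := by
    apply mul_right_cancel₀ hl1'
    calc (lam - 1) ^ (μ+1) * (∑ i ∈ range a, lam ^ i * Fc a μ i) * (lam - 1)
        = (lam - 1) ^ (μ+2) * (∑ i ∈ range a, lam ^ i * Fc a μ i) := by ring
      _ = (lam - 1) * ((-1:ℂ)^μ * ∑ j ∈ range μ, (eulerianNum μ j : ℂ) * lam^(j+1)) := habel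
      _ = _ := by ring
  have hGval : -(∑ i ∈ range a, lam ^ i * Fc a μ i)
      = ((-1 : ℂ) ^ (μ + 1) / (lam - 1) ^ (μ + 1)) *
          ∑ j ∈ Finset.range μ, (eulerianNum μ j : ℂ) * lam ^ (j + 1) := by
    rw [div_mul_eq_mul_div, eq_div_iff hpne]
    linear_combination -hG1
  rw [hGIcc]
  linear_combination hGval
end

section
/- Let a be a positive integer, μ a positive integer, and λ ∈ ℂ with λ^{a} = 1 and λ ≠ 1. Then −(1/(μ+1))·Σ_{κ=0}^{μ} C(μ+1,κ) B_κ a^{κ−1} Σ_{i=0}^{a−1} i^{μ+1−κ} λ^{i} = ((−1)^{μ+1}/(λ−1)^{μ+1})·Σ_{j=0}^{μ−1} ⟨μ, j⟩ λ^{j+1}. -/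
open Finset

open PowerSeries

lemma sub_one_pow_diff (m : ℕ) (y : ℂ) :
    y^m - (y-1)^m = -∑ l ∈ range m, y^l * (-1:ℂ)^(m-l) * (m.choose l : ℂ) := by
  have h : (y - 1)^m = ∑ l ∈ range (m+1), y^l * (-1:ℂ)^(m-l) * (m.choose l : ℂ) := by
    rw [sub_eq_add_neg, add_pow]
  rw [h, Finset.sum_range_succ]
  simp

lemma alt_vanish : ∀ (n : ℕ), ∀ m < n, ∀ x : ℂ,
    ∑ k ∈ range (n+1), (-1:ℂ)^k * (n.choose k : ℂ) * (x - k)^m = 0 := by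
  intro n
  induction n with
  | zero => intro m hm; omega
  | succ n ih =>
    intro m hm x
    have key : ∑ k ∈ range (n+2), (-1:ℂ)^k * ((n+1).choose k : ℂ) * (x - k)^m
        = (∑ k ∈ range (n+1), (-1:ℂ)^k * (n.choose k : ℂ) * (x - k)^m)
          - ∑ k ∈ range (n+1), (-1:ℂ)^k * (n.choose k : ℂ) * ((x-1) - k)^m := by
      rw [Finset.sum_range_succ' (fun k => (-1:ℂ)^k * ((n+1).choose k : ℂ) * (x - k)^m) (n+1)]
      have e1 : ∀ k ∈ range (n+1), (-1:ℂ)^(k+1) * ((n+1).choose (k+1) : ℂ) * (x - ((k+1:ℕ):ℂ))^m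
          = (-((-1:ℂ)^k * (n.choose k : ℂ) * ((x-1) - k)^m))
            + (-1:ℂ)^(k+1) * (n.choose (k+1) : ℂ) * (x - ((k+1:ℕ):ℂ))^m := by
        intro k _
        rw [Nat.choose_succ_succ]
        have : x - ((k+1:ℕ):ℂ) = (x-1) - k := by push_cast; ring
        rw [this]
        push_cast
        ring
      rw [Finset.sum_congr rfl e1, Finset.sum_add_distrib]
      have e3 : (∑ k ∈ range (n+1), (-1:ℂ)^(k+1) * (n.choose (k+1) : ℂ) * (x - ((k+1:ℕ):ℂ))^m)
          + (-1:ℂ)^0 * (((n+1)).choose 0 : ℂ) * (x - ((0:ℕ):ℂ))^m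
          = ∑ k ∈ range (n+1), (-1:ℂ)^k * (n.choose k : ℂ) * (x - k)^m := by
        have h2 : ∑ k ∈ range (n+1), (-1:ℂ)^k * (n.choose k : ℂ) * (x - k)^m
            = ∑ k ∈ range (n+2), (-1:ℂ)^k * (n.choose k : ℂ) * (x - k)^m := by
          rw [Finset.sum_range_succ (fun k => (-1:ℂ)^k * (n.choose k : ℂ) * (x - k)^m) (n+1)]
          simp
        rw [h2, Finset.sum_range_succ' (fun k => (-1:ℂ)^k * (n.choose k : ℂ) * (x - k)^m) (n+1)]
        simp
      rw [add_assoc, e3]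
      rw [Finset.sum_neg_distrib]
      ring
    rw [key]
    rcases Nat.lt_or_ge m n with h | h
    · rw [ih m h x, ih m h (x-1), sub_zero]
    · have hm' : m = n := by omega
      subst hm'
      rw [← Finset.sum_sub_distrib]
      have step : ∀ k ∈ range (m+1), (-1:ℂ)^k * (m.choose k : ℂ) * (x - k)^m
            - (-1:ℂ)^k * (m.choose k : ℂ) * ((x-1) - k)^m
          = ∑ l ∈ range m, -((x-(k:ℂ))^l * (-1:ℂ)^(m-l) * (m.choose l : ℂ) * ((-1:ℂ)^k * (m.choose k : ℂ))) := by
        intro k _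
        rw [← mul_sub, show x - 1 - (k:ℂ) = (x - k) - 1 by ring, sub_one_pow_diff]
        rw [mul_neg, Finset.mul_sum, ← Finset.sum_neg_distrib]
        exact Finset.sum_congr rfl fun l _ => by ring
      rw [Finset.sum_congr rfl step, Finset.sum_comm]
      apply Finset.sum_eq_zero
      intro l hl
      simp only [mem_range] at hl
      calc ∑ k ∈ range (m+1), -((x-(k:ℂ))^l * (-1:ℂ)^(m-l) * (m.choose l : ℂ) * ((-1:ℂ)^k * (m.choose k : ℂ)))
          = -((-1:ℂ)^(m-l) * (m.choose l : ℂ)) * ∑ k ∈ range (m+1), (-1:ℂ)^k * (m.choose k : ℂ) * (x-(k:ℂ))^l := by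
            rw [Finset.mul_sum]; exact Finset.sum_congr rfl fun k _ => by ring
        _ = 0 := by rw [ih l hl x, mul_zero]


noncomputable def PA (n : ℕ) : Polynomial ℂ :=
  if n = 0 then 1 else ∑ j ∈ Finset.range n, Polynomial.C ((eulerianNum n j : ℂ)) * Polynomial.X^(j+1)

noncomputable def Gs (n : ℕ) : PowerSeries ℂ := PowerSeries.mk fun i => (i:ℂ)^n

lemma one_sub_X_pow (n : ℕ) : ((1 : ℂ⟦X⟧) - PowerSeries.X)^n
    = ∑ k ∈ range (n+1), PowerSeries.C ((-1:ℂ)^k * (n.choose k : ℂ)) * PowerSeries.X^k := by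
  rw [sub_eq_add_neg, add_comm, add_pow]
  refine Finset.sum_congr rfl fun k _ => ?_
  rw [one_pow, mul_one, neg_pow, ← map_natCast (PowerSeries.C (R := ℂ)) (n.choose k)]
  push_cast [map_mul, map_pow, map_neg, map_one]
  ring

lemma coeff_one_sub_X_pow_mul (n j : ℕ) (f : ℂ⟦X⟧) :
    PowerSeries.coeff j (((1 : ℂ⟦X⟧) - PowerSeries.X)^n * f)
    = ∑ k ∈ range (n+1), (-1:ℂ)^k * (n.choose k : ℂ) *
        (if k ≤ j then PowerSeries.coeff (j-k) f else 0) := by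
  rw [one_sub_X_pow, Finset.sum_mul, map_sum]
  refine Finset.sum_congr rfl fun k _ => ?_
  rw [mul_assoc, coeff_C_mul, coeff_X_pow_mul']

lemma coe_PA (n : ℕ) : ((PA n : Polynomial ℂ) : ℂ⟦X⟧) = (1 - PowerSeries.X)^(n+1) * Gs n := by
  ext j
  rw [Polynomial.coeff_coe, coeff_one_sub_X_pow_mul]
  simp only [Gs, coeff_mk]
  rcases Nat.eq_zero_or_pos n with hn | hn
  · subst hn
    rw [show PA 0 = 1 from if_pos rfl]
    rw [Finset.sum_range_succ, Finset.sum_range_one]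
    rcases Nat.eq_zero_or_pos j with hj | hj
    · subst hj; simp
    · rw [Polynomial.coeff_one, if_neg (by omega)]
      rw [if_pos (Nat.zero_le _), if_pos (by omega)]
      simp
  · -- n ≥ 1
    rw [PA, if_neg (by omega)]
    rw [Polynomial.finset_sum_coeff]
    simp only [Polynomial.coeff_C_mul, Polynomial.coeff_X_pow]
    rcases le_or_gt j n with hj | hj
    · -- j ≤ n
      have hL : ∑ j' ∈ range n, (eulerianNum n j' : ℂ) * (if j = j' + 1 then 1 else 0)
          = if 1 ≤ j then (eulerianNum n (j-1) : ℂ) else 0 := by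
        rcases Nat.eq_zero_or_pos j with hj0 | hj0
        · subst hj0; simp
        · rw [if_pos (by omega : 1 ≤ j)]
          rw [Finset.sum_eq_single (j-1)]
          · rw [if_pos (by omega), mul_one]
          · intro b _ hb
            rw [if_neg (by omega), mul_zero]
          · intro hb
            simp only [mem_range] at hb
            omega
      rw [hL]
      have hR : ∑ k ∈ range (n+2), (-1:ℂ)^k * ((n+1).choose k : ℂ) *
            (if k ≤ j then ((j-k : ℕ) : ℂ)^n else 0)
          = ∑ k ∈ range j, (-1:ℂ)^k * ((n+1).choose k : ℂ) * ((j-k : ℕ) : ℂ)^n := by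
        rw [← Finset.sum_subset (Finset.range_subset_range.mpr (by omega :  j ≤ n + 2))]
        · refine Finset.sum_congr rfl fun k hk => ?_
          simp only [mem_range] at hk
          rw [if_pos (by omega)]
        · intro k hk hk2
          simp only [mem_range] at hk hk2
          rcases Nat.eq_or_lt_of_le (by omega : j ≤ k) with hkj | hkj
          · rw [if_pos (by omega), ← hkj, Nat.sub_self]
            rw [Nat.cast_zero, zero_pow (by omega), mul_zero]
          · rw [if_neg (by omega), mul_zero]
      rw [hR]
      rcases Nat.eq_zero_or_pos j with hj0 | hj0
      · subst hj0; simp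
      · rw [if_pos (by omega : 1 ≤ j), eulerianNum]
        push_cast
        rw [show j - 1 + 1 = j from by omega]
        refine Finset.sum_congr rfl fun k hk => ?_
        simp only [mem_range] at hk
        rw [show j - k = j - 1 - k + 1 from by omega]
        push_cast
        ring
    · -- j > n
      have hL : ∑ j' ∈ range n, (eulerianNum n j' : ℂ) * (if j = j' + 1 then 1 else 0) = 0 := by
        refine Finset.sum_eq_zero fun j' hj' => ?_
        simp only [mem_range] at hj'
        rw [if_neg (by omega), mul_zero]
      rw [hL]
      have := alt_vanish (n+1) n (by omega) (j : ℂ)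
      rw [← this]
      refine Finset.sum_congr rfl fun k hk => ?_
      simp only [mem_range] at hk
      rw [if_pos (by omega)]
      rw [Nat.cast_sub (by omega : k ≤ j)]

lemma shift_G (n : ℕ) (hn : 1 ≤ n) :
    PowerSeries.X * ∑ k ∈ range (n+1), PowerSeries.C (n.choose k : ℂ) * Gs k = Gs n := by
  ext j
  rcases Nat.eq_zero_or_pos j with hj | hj
  · subst hj
    simp [Gs, zero_pow (by omega : n ≠ 0)]
  · rw [show (PowerSeries.X : ℂ⟦X⟧) = PowerSeries.X ^ 1 from (pow_one _).symm,
      coeff_X_pow_mul', if_pos (by omega : 1 ≤ j), map_sum]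
    simp only [coeff_C_mul, Gs, coeff_mk]
    have : ((j : ℂ))^n = (((j-1:ℕ):ℂ) + 1)^n := by
      rw [show ((j-1:ℕ):ℂ) + 1 = ((j-1+1:ℕ):ℂ) from by push_cast; ring,
        show j - 1 + 1 = j from by omega]
    rw [this, add_pow]
    refine Finset.sum_congr rfl fun k _ => ?_
    rw [one_pow, mul_one]
    ring

lemma PB_eq (n : ℕ) (hn : 1 ≤ n) :
    Polynomial.X * ∑ k ∈ range (n+1),
      Polynomial.C ((n.choose k : ℂ)) * PA k * (1 - Polynomial.X)^(n-k) = PA n := by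
  rw [← Polynomial.coe_inj]
  rw [← Polynomial.coeToPowerSeries.ringHom_apply, map_mul, map_sum]
  simp only [map_mul, map_pow, map_sub, map_one, Polynomial.coeToPowerSeries.ringHom_apply,
    Polynomial.coe_X, Polynomial.coe_C]
  calc (PowerSeries.X : ℂ⟦X⟧) * ∑ k ∈ range (n+1),
        PowerSeries.C ((n.choose k : ℂ)) * (PA k : ℂ⟦X⟧) * (1 - PowerSeries.X)^(n-k)
      = (1 - PowerSeries.X)^(n+1) *
          (PowerSeries.X * ∑ k ∈ range (n+1), PowerSeries.C (n.choose k : ℂ) * Gs k) := by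
        rw [Finset.mul_sum, Finset.mul_sum, Finset.mul_sum]
        refine Finset.sum_congr rfl fun k hk => ?_
        simp only [mem_range] at hk
        rw [coe_PA]
        rw [show (1 - PowerSeries.X : ℂ⟦X⟧)^(n+1)
          = (1 - PowerSeries.X)^(k+1) * (1 - PowerSeries.X)^(n-k) from by
            rw [← pow_add]; congr 1; omega]
        ring
    _ = (PA n : ℂ⟦X⟧) := by rw [shift_G n hn, coe_PA]

lemma dagger (n : ℕ) (hn : 1 ≤ n) (lam : ℂ) :
    lam * ∑ k ∈ range (n+1),
      (n.choose k : ℂ) * (PA k).eval lam * (1 - lam)^(n-k) = (PA n).eval lam := by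
  have := congrArg (Polynomial.eval lam) (PB_eq n hn)
  simpa only [Polynomial.eval_mul, Polynomial.eval_finset_sum, Polynomial.eval_C,
    Polynomial.eval_X, Polynomial.eval_pow, Polynomial.eval_sub, Polynomial.eval_one] using this

noncomputable def Ms (lam : ℂ) : PowerSeries ℂ :=
  PowerSeries.mk fun n => -((PA n).eval lam / ((1-lam)^(n+1) * (n.factorial : ℂ)))

lemma Ms_inv (lam : ℂ) (hl1 : lam ≠ 1) :
    (PowerSeries.C lam * PowerSeries.exp ℂ - 1) * Ms lam = 1 := by
  have h1 : (1:ℂ) - lam ≠ 0 := sub_ne_zero.mpr (Ne.symm hl1)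
  have hfact : ∀ m : ℕ, (m.factorial : ℂ) ≠ 0 := fun m => Nat.cast_ne_zero.mpr m.factorial_ne_zero
  ext n
  rw [sub_mul, one_mul, map_sub, mul_assoc, coeff_C_mul, coeff_mul]
  rw [Finset.Nat.sum_antidiagonal_eq_sum_range_succ
    (fun a b => PowerSeries.coeff a (PowerSeries.exp ℂ) * PowerSeries.coeff b (Ms lam))]
  simp only [PowerSeries.coeff_exp, Ms, coeff_mk, PowerSeries.coeff_one]
  have hmap : ∀ k : ℕ, (algebraMap ℚ ℂ) (1 / (k.factorial : ℚ)) = ((k.factorial : ℂ))⁻¹ := by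
    intro k; rw [map_div₀, map_one, map_natCast, one_div]
  simp only [hmap]
  rcases Nat.eq_zero_or_pos n with hn | hn
  · subst hn
    rw [if_pos rfl, Finset.sum_range_one]
    simp only [Nat.sub_zero, Nat.factorial_zero, Nat.cast_one, inv_one, one_mul, pow_one,
      Polynomial.eval_one, PA]
    norm_num
    field_simp
    ring
  · rw [if_neg (by omega)]
    have key : ∑ k ∈ range (n+1), ((k.factorial : ℂ))⁻¹ *
          (-((PA (n-k)).eval lam / ((1-lam)^(n-k+1) * ((n-k).factorial : ℂ))))
        = -(1 / ((1-lam)^(n+1) * (n.factorial : ℂ))) *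
          ∑ k ∈ range (n+1), (n.choose k : ℂ) * (PA k).eval lam * (1 - lam)^(n-k) := by
      rw [← Finset.sum_range_reflect, Finset.mul_sum]
      refine Finset.sum_congr rfl fun k hk => ?_
      simp only [mem_range] at hk
      rw [show n + 1 - 1 - k = n - k from by omega, show n - (n - k) = k from by omega]
      rw [Nat.cast_choose ℂ (by omega : k ≤ n)]
      rw [show (1-lam)^(n+1) = (1-lam)^(k+1) * (1-lam)^(n-k) from by
        rw [← pow_add]; congr 1; omega]
      have h2 : (1-lam)^(k+1) ≠ 0 := pow_ne_zero _ h1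
      have h3 : (1-lam)^(n-k) ≠ 0 := pow_ne_zero _ h1
      have hk1 : ((k.factorial : ℂ)) ≠ 0 := hfact k
      have hk2 : (((n-k).factorial : ℂ)) ≠ 0 := hfact (n-k)
      have hk3 : ((n.factorial : ℂ)) ≠ 0 := hfact n
      revert h2 h3
      generalize ((1:ℂ)-lam)^(k+1) = P
      generalize ((1:ℂ)-lam)^(n-k) = Q
      generalize Polynomial.eval lam (PA k) = E
      intro h2 h3
      field_simp
    rw [key]
    have dag := dagger n hn lam
    have rearr : lam * (-(1 / ((1-lam)^(n+1) * (n.factorial : ℂ))) *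
          ∑ k ∈ range (n+1), (n.choose k : ℂ) * (PA k).eval lam * (1 - lam)^(n-k))
        = -(1 / ((1-lam)^(n+1) * (n.factorial : ℂ))) *
          (lam * ∑ k ∈ range (n+1), (n.choose k : ℂ) * (PA k).eval lam * (1 - lam)^(n-k)) := by
      ring
    rw [rearr, dag]
    ring

lemma eval_PA (n : ℕ) (hn : 1 ≤ n) (lam : ℂ) :
    Polynomial.eval lam (PA n) = ∑ j ∈ range n, (eulerianNum n j : ℂ) * lam^(j+1) := by
  rw [PA, if_neg (by omega), Polynomial.eval_finset_sum]
  simp [Polynomial.eval_pow]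

theorem stmt18' (a : ℕ) (ha : 0 < a) (μ : ℕ) (hμ : 0 < μ)
    (lam : ℂ) (hla : lam ^ a = 1) (hl1 : lam ≠ 1) :
    -((1 : ℂ) / ((μ : ℂ) + 1)) * ∑ κ ∈ Finset.range (μ + 1),
        ((μ + 1).choose κ : ℂ) * ((bernoulli κ : ℚ) : ℂ) * (a : ℂ) ^ ((κ : ℤ) - 1) *
          ∑ i ∈ Finset.range a, (i : ℂ) ^ (μ + 1 - κ) * lam ^ i =
      ((-1 : ℂ) ^ (μ + 1) / (lam - 1) ^ (μ + 1)) *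
        ∑ j ∈ Finset.range μ, (eulerianNum μ j : ℂ) * lam ^ (j + 1) := by
  have h1 : (1:ℂ) - lam ≠ 0 := sub_ne_zero.mpr (Ne.symm hl1)
  have ha0 : (a:ℂ) ≠ 0 := Nat.cast_ne_zero.mpr (by omega)
  have hfact : ∀ m : ℕ, (m.factorial : ℂ) ≠ 0 := fun m => Nat.cast_ne_zero.mpr m.factorial_ne_zero
  have hgeom : ∑ i ∈ range a, lam^i = 0 := by
    have h := geom_sum_mul lam a
    rw [hla, sub_self] at h
    exact (mul_eq_zero.mp h).resolve_right (sub_ne_zero.mpr hl1)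
  -- main power series identity
  have hF : (∑ i ∈ range a, (PowerSeries.C lam * PowerSeries.exp ℂ)^i) *
      (PowerSeries.C lam * PowerSeries.exp ℂ - 1) = (PowerSeries.exp ℂ)^a - 1 := by
    rw [geom_sum_mul, mul_pow, ← map_pow, hla, map_one, one_mul]
  have hB : PowerSeries.rescale (a:ℂ) (bernoulliPowerSeries ℂ) * ((PowerSeries.exp ℂ)^a - 1)
      = PowerSeries.C (a:ℂ) * PowerSeries.X := by
    rw [PowerSeries.exp_pow_eq_rescale_exp, ← PowerSeries.rescale_X (a:ℂ), ← map_one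
      (PowerSeries.rescale (a:ℂ)), ← map_sub, ← map_mul, bernoulliPowerSeries_mul_exp_sub_one]
  have hMain : PowerSeries.rescale (a:ℂ) (bernoulliPowerSeries ℂ) *
      (∑ i ∈ range a, (PowerSeries.C lam * PowerSeries.exp ℂ)^i)
      = PowerSeries.C (a:ℂ) * PowerSeries.X * Ms lam := by
    have h2 := Ms_inv lam hl1
    calc PowerSeries.rescale (a:ℂ) (bernoulliPowerSeries ℂ) *
          (∑ i ∈ range a, (PowerSeries.C lam * PowerSeries.exp ℂ)^i)
        = PowerSeries.rescale (a:ℂ) (bernoulliPowerSeries ℂ) *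
          (∑ i ∈ range a, (PowerSeries.C lam * PowerSeries.exp ℂ)^i) *
          ((PowerSeries.C lam * PowerSeries.exp ℂ - 1) * Ms lam) := by rw [h2, mul_one]
      _ = PowerSeries.rescale (a:ℂ) (bernoulliPowerSeries ℂ) *
          ((∑ i ∈ range a, (PowerSeries.C lam * PowerSeries.exp ℂ)^i) *
            (PowerSeries.C lam * PowerSeries.exp ℂ - 1)) * Ms lam := by ring
      _ = PowerSeries.C (a:ℂ) * PowerSeries.X * Ms lam := by rw [hF, hB]
  -- coefficient extraction at μ+1
  have hcoeff := congrArg (PowerSeries.coeff (μ+1)) hMain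
  rw [PowerSeries.coeff_mul] at hcoeff
  rw [Finset.Nat.sum_antidiagonal_eq_sum_range_succ (fun x y =>
      PowerSeries.coeff x (PowerSeries.rescale (a:ℂ) (bernoulliPowerSeries ℂ)) *
      PowerSeries.coeff y (∑ i ∈ range a, (PowerSeries.C lam * PowerSeries.exp ℂ)^i))]
    at hcoeff
  have hcB : ∀ κ : ℕ, PowerSeries.coeff κ (PowerSeries.rescale (a:ℂ) (bernoulliPowerSeries ℂ))
      = (a:ℂ)^κ * (((bernoulli κ : ℚ) : ℂ) / (κ.factorial : ℂ)) := by
    intro κ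
    rw [PowerSeries.coeff_rescale, bernoulliPowerSeries, PowerSeries.coeff_mk, eq_ratCast]
    push_cast
    ring
  have hcF : ∀ m : ℕ, PowerSeries.coeff m
      (∑ i ∈ range a, (PowerSeries.C lam * PowerSeries.exp ℂ)^i)
      = (∑ i ∈ range a, (i:ℂ)^m * lam^i) / (m.factorial : ℂ) := by
    intro m
    rw [map_sum, Finset.sum_div]
    refine Finset.sum_congr rfl fun i _ => ?_
    rw [mul_pow, ← map_pow, PowerSeries.exp_pow_eq_rescale_exp, PowerSeries.coeff_C_mul,
      PowerSeries.coeff_rescale, PowerSeries.coeff_exp, eq_ratCast]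
    push_cast
    ring
  have hcR : PowerSeries.coeff (μ+1) (PowerSeries.C (a:ℂ) * PowerSeries.X * Ms lam)
      = (a:ℂ) * (-(Polynomial.eval lam (PA μ) / ((1-lam)^(μ+1) * (μ.factorial : ℂ)))) := by
    rw [mul_assoc, PowerSeries.coeff_C_mul, show (PowerSeries.X : ℂ⟦X⟧) = PowerSeries.X^1 from
      (pow_one _).symm, PowerSeries.coeff_X_pow_mul', if_pos (by omega : 1 ≤ μ+1)]
    rw [show μ+1-1 = μ from rfl]
    rw [Ms, PowerSeries.coeff_mk]
  simp only [hcB, hcF, hcR] at hcoeff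
  -- final algebra
  have key : ∑ κ ∈ range (μ+2), (a:ℂ)^κ * (((bernoulli κ : ℚ) : ℂ) / (κ.factorial : ℂ)) *
        ((∑ i ∈ range a, (i:ℂ)^(μ+1-κ) * lam^i) / ((μ+1-κ).factorial : ℂ))
      = (a:ℂ) * (-(Polynomial.eval lam (PA μ) / ((1-lam)^(μ+1) * (μ.factorial : ℂ)))) := hcoeff
  -- relate statement sum to the range (μ+2) sum
  have hext : ∑ κ ∈ range (μ+2), (a:ℂ)^κ * (((bernoulli κ : ℚ) : ℂ) / (κ.factorial : ℂ)) *
        ((∑ i ∈ range a, (i:ℂ)^(μ+1-κ) * lam^i) / ((μ+1-κ).factorial : ℂ))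
      = ∑ κ ∈ range (μ+1), (a:ℂ)^κ * (((bernoulli κ : ℚ) : ℂ) / (κ.factorial : ℂ)) *
        ((∑ i ∈ range a, (i:ℂ)^(μ+1-κ) * lam^i) / ((μ+1-κ).factorial : ℂ)) := by
    rw [Finset.sum_range_succ]
    have : ∑ i ∈ range a, (i:ℂ)^(μ+1-(μ+1)) * lam^i = 0 := by
      simpa using hgeom
    rw [this]
    simp
  rw [hext] at key
  have hLHS : ∑ κ ∈ Finset.range (μ + 1),
        ((μ + 1).choose κ : ℂ) * ((bernoulli κ : ℚ) : ℂ) * (a : ℂ) ^ ((κ : ℤ) - 1) *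
          ∑ i ∈ Finset.range a, (i : ℂ) ^ (μ + 1 - κ) * lam ^ i
      = ((μ+1).factorial : ℂ) / (a:ℂ) *
        ∑ κ ∈ range (μ+1), (a:ℂ)^κ * (((bernoulli κ : ℚ) : ℂ) / (κ.factorial : ℂ)) *
        ((∑ i ∈ range a, (i:ℂ)^(μ+1-κ) * lam^i) / ((μ+1-κ).factorial : ℂ)) := by
    rw [Finset.mul_sum]
    refine Finset.sum_congr rfl fun κ hκ => ?_
    simp only [mem_range] at hκ
    rw [Nat.cast_choose ℂ (by omega : κ ≤ μ+1)]
    rw [show (a:ℂ) ^ ((κ:ℤ) - 1) = (a:ℂ)^κ / (a:ℂ) from by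
      rw [zpow_sub₀ ha0, zpow_natCast, zpow_one]]
    have h4 := hfact κ
    have h5 := hfact (μ+1-κ)
    have h6 := hfact (μ+1)
    field_simp
  rw [hLHS, key, ← eval_PA μ hμ lam]
  have h7 : ((μ:ℂ)+1) ≠ 0 := Nat.cast_add_one_ne_zero μ
  have h8 : (1-lam)^(μ+1) ≠ 0 := pow_ne_zero _ h1
  have h9 : (lam-1)^(μ+1) = (-1:ℂ)^(μ+1) * (1-lam)^(μ+1) := by
    rw [← mul_pow]
    ring_nf
  rw [h9, Nat.factorial_succ]
  have h10 := hfact μ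
  have hm1 : ((-1:ℂ))^(μ+1) ≠ 0 := pow_ne_zero _ (by norm_num)
  push_cast
  field_simp

/-- For `λ^a = 1`, `λ ≠ 1`:
`−(1/(μ+1))·Σ_{κ=0}^{μ} C(μ+1,κ) B_κ a^{κ−1} Σ_{i=0}^{a−1} i^{μ+1−κ} λ^i
  = ((−1)^{μ+1}/(λ−1)^{μ+1})·Σ_{j=0}^{μ−1} ⟨μ,j⟩ λ^{j+1}`. -/
theorem stmt18 (a : ℕ) (ha : 0 < a) (μ : ℕ) (hμ : 0 < μ)
    (lam : ℂ) (hla : lam ^ a = 1) (hl1 : lam ≠ 1) :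
    -((1 : ℂ) / ((μ : ℂ) + 1)) * ∑ κ ∈ Finset.range (μ + 1),
        ((μ + 1).choose κ : ℂ) * ((bernoulli κ : ℚ) : ℂ) * (a : ℂ) ^ ((κ : ℤ) - 1) *
          ∑ i ∈ Finset.range a, (i : ℂ) ^ (μ + 1 - κ) * lam ^ i =
      ((-1 : ℂ) ^ (μ + 1) / (lam - 1) ^ (μ + 1)) *
        ∑ j ∈ Finset.range μ, (eulerianNum μ j : ℂ) * lam ^ (j + 1) := by
  have h1 : (1:ℂ) - lam ≠ 0 := sub_ne_zero.mpr (Ne.symm hl1)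
  have ha0 : (a:ℂ) ≠ 0 := Nat.cast_ne_zero.mpr (by omega)
  have hfact : ∀ m : ℕ, (m.factorial : ℂ) ≠ 0 := fun m => Nat.cast_ne_zero.mpr m.factorial_ne_zero
  have hgeom : ∑ i ∈ range a, lam^i = 0 := by
    have h := geom_sum_mul lam a
    rw [hla, sub_self] at h
    exact (mul_eq_zero.mp h).resolve_right (sub_ne_zero.mpr hl1)
  -- main power series identity
  have hF : (∑ i ∈ range a, (PowerSeries.C lam * PowerSeries.exp ℂ)^i) *
      (PowerSeries.C lam * PowerSeries.exp ℂ - 1) = (PowerSeries.exp ℂ)^a - 1 := by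
    rw [geom_sum_mul, mul_pow, ← map_pow, hla, map_one, one_mul]
  have hB : PowerSeries.rescale (a:ℂ) (bernoulliPowerSeries ℂ) * ((PowerSeries.exp ℂ)^a - 1)
      = PowerSeries.C (a:ℂ) * PowerSeries.X := by
    rw [PowerSeries.exp_pow_eq_rescale_exp, ← PowerSeries.rescale_X (a:ℂ), ← map_one
      (PowerSeries.rescale (a:ℂ)), ← map_sub, ← map_mul, bernoulliPowerSeries_mul_exp_sub_one]
  have hMain : PowerSeries.rescale (a:ℂ) (bernoulliPowerSeries ℂ) *
      (∑ i ∈ range a, (PowerSeries.C lam * PowerSeries.exp ℂ)^i)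
      = PowerSeries.C (a:ℂ) * PowerSeries.X * Ms lam := by
    have h2 := Ms_inv lam hl1
    calc PowerSeries.rescale (a:ℂ) (bernoulliPowerSeries ℂ) *
          (∑ i ∈ range a, (PowerSeries.C lam * PowerSeries.exp ℂ)^i)
        = PowerSeries.rescale (a:ℂ) (bernoulliPowerSeries ℂ) *
          (∑ i ∈ range a, (PowerSeries.C lam * PowerSeries.exp ℂ)^i) *
          ((PowerSeries.C lam * PowerSeries.exp ℂ - 1) * Ms lam) := by rw [h2, mul_one]
      _ = PowerSeries.rescale (a:ℂ) (bernoulliPowerSeries ℂ) *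
          ((∑ i ∈ range a, (PowerSeries.C lam * PowerSeries.exp ℂ)^i) *
            (PowerSeries.C lam * PowerSeries.exp ℂ - 1)) * Ms lam := by ring
      _ = PowerSeries.C (a:ℂ) * PowerSeries.X * Ms lam := by rw [hF, hB]
  -- coefficient extraction at μ+1
  have hcoeff := congrArg (PowerSeries.coeff (μ+1)) hMain
  rw [PowerSeries.coeff_mul] at hcoeff
  rw [Finset.Nat.sum_antidiagonal_eq_sum_range_succ (fun x y =>
      PowerSeries.coeff x (PowerSeries.rescale (a:ℂ) (bernoulliPowerSeries ℂ)) *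
      PowerSeries.coeff y (∑ i ∈ range a, (PowerSeries.C lam * PowerSeries.exp ℂ)^i))]
    at hcoeff
  have hcB : ∀ κ : ℕ, PowerSeries.coeff κ (PowerSeries.rescale (a:ℂ) (bernoulliPowerSeries ℂ))
      = (a:ℂ)^κ * (((bernoulli κ : ℚ) : ℂ) / (κ.factorial : ℂ)) := by
    intro κ
    rw [PowerSeries.coeff_rescale, bernoulliPowerSeries, PowerSeries.coeff_mk, eq_ratCast]
    push_cast
    ring
  have hcF : ∀ m : ℕ, PowerSeries.coeff m
      (∑ i ∈ range a, (PowerSeries.C lam * PowerSeries.exp ℂ)^i)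
      = (∑ i ∈ range a, (i:ℂ)^m * lam^i) / (m.factorial : ℂ) := by
    intro m
    rw [map_sum, Finset.sum_div]
    refine Finset.sum_congr rfl fun i _ => ?_
    rw [mul_pow, ← map_pow, PowerSeries.exp_pow_eq_rescale_exp, PowerSeries.coeff_C_mul,
      PowerSeries.coeff_rescale, PowerSeries.coeff_exp, eq_ratCast]
    push_cast
    ring
  have hcR : PowerSeries.coeff (μ+1) (PowerSeries.C (a:ℂ) * PowerSeries.X * Ms lam)
      = (a:ℂ) * (-(Polynomial.eval lam (PA μ) / ((1-lam)^(μ+1) * (μ.factorial : ℂ)))) := by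
    rw [mul_assoc, PowerSeries.coeff_C_mul, show (PowerSeries.X : ℂ⟦X⟧) = PowerSeries.X^1 from
      (pow_one _).symm, PowerSeries.coeff_X_pow_mul', if_pos (by omega : 1 ≤ μ+1)]
    rw [show μ+1-1 = μ from rfl]
    rw [Ms, PowerSeries.coeff_mk]
  simp only [hcB, hcF, hcR] at hcoeff
  -- final algebra
  have key : ∑ κ ∈ range (μ+2), (a:ℂ)^κ * (((bernoulli κ : ℚ) : ℂ) / (κ.factorial : ℂ)) *
        ((∑ i ∈ range a, (i:ℂ)^(μ+1-κ) * lam^i) / ((μ+1-κ).factorial : ℂ))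
      = (a:ℂ) * (-(Polynomial.eval lam (PA μ) / ((1-lam)^(μ+1) * (μ.factorial : ℂ)))) := hcoeff
  -- relate statement sum to the range (μ+2) sum
  have hext : ∑ κ ∈ range (μ+2), (a:ℂ)^κ * (((bernoulli κ : ℚ) : ℂ) / (κ.factorial : ℂ)) *
        ((∑ i ∈ range a, (i:ℂ)^(μ+1-κ) * lam^i) / ((μ+1-κ).factorial : ℂ))
      = ∑ κ ∈ range (μ+1), (a:ℂ)^κ * (((bernoulli κ : ℚ) : ℂ) / (κ.factorial : ℂ)) *
        ((∑ i ∈ range a, (i:ℂ)^(μ+1-κ) * lam^i) / ((μ+1-κ).factorial : ℂ)) := by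
    rw [Finset.sum_range_succ]
    have : ∑ i ∈ range a, (i:ℂ)^(μ+1-(μ+1)) * lam^i = 0 := by
      simpa using hgeom
    rw [this]
    simp
  rw [hext] at key
  have hLHS : ∑ κ ∈ Finset.range (μ + 1),
        ((μ + 1).choose κ : ℂ) * ((bernoulli κ : ℚ) : ℂ) * (a : ℂ) ^ ((κ : ℤ) - 1) *
          ∑ i ∈ Finset.range a, (i : ℂ) ^ (μ + 1 - κ) * lam ^ i
      = ((μ+1).factorial : ℂ) / (a:ℂ) *
        ∑ κ ∈ range (μ+1), (a:ℂ)^κ * (((bernoulli κ : ℚ) : ℂ) / (κ.factorial : ℂ)) *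
        ((∑ i ∈ range a, (i:ℂ)^(μ+1-κ) * lam^i) / ((μ+1-κ).factorial : ℂ)) := by
    rw [Finset.mul_sum]
    refine Finset.sum_congr rfl fun κ hκ => ?_
    simp only [mem_range] at hκ
    rw [Nat.cast_choose ℂ (by omega : κ ≤ μ+1)]
    rw [show (a:ℂ) ^ ((κ:ℤ) - 1) = (a:ℂ)^κ / (a:ℂ) from by
      rw [zpow_sub₀ ha0, zpow_natCast, zpow_one]]
    have h4 := hfact κ
    have h5 := hfact (μ+1-κ)
    have h6 := hfact (μ+1)
    field_simp
  rw [hLHS, key, ← eval_PA μ hμ lam]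
  have h7 : ((μ:ℂ)+1) ≠ 0 := Nat.cast_add_one_ne_zero μ
  have h8 : (1-lam)^(μ+1) ≠ 0 := pow_ne_zero _ h1
  have h9 : (lam-1)^(μ+1) = (-1:ℂ)^(μ+1) * (1-lam)^(μ+1) := by
    rw [← mul_pow]
    ring_nf
  rw [h9, Nat.factorial_succ]
  have h10 := hfact μ
  have hm1 : ((-1:ℂ))^(μ+1) ≠ 0 := pow_ne_zero _ (by norm_num)
  push_cast
  field_simp
end
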